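/- arXiv:1912.00851 — 2 statements merged into one kernel-verified Lean document; each statement's English description precedes it below -/
import Mathlib

section
/- Let f : ℕ → [0,∞) be weakly super-multiplicative, and suppose f has a normal order g, where g : (0,∞) → (0,∞) is strictly positive and log-uniformly continuous. Then sup_{n≥2} (log f(n))/(log n) = lim ess_{n→∞} (log f(n))/(log n), as elements of ℝ ∪ {−∞, +∞} (with the convention log 0 = −∞); in particular the essential limit exists. -/
/-- The upper density of a set of natural numbers:
`limsup_{N→∞} #{n ∈ S : n ≤ N} / N`. -/
noncomputable def upperDensity (S : Set ℕ) : ℝ :=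
  Filter.limsup (fun N : ℕ => (({n | n ∈ S ∧ n ≤ N} : Set ℕ).ncard : ℝ) / N) Filter.atTop

/-- `S` has natural density `α` if `#{n ∈ S : n ≤ N} / N → α`. -/
def HasNatDensity (S : Set ℕ) (α : ℝ) : Prop :=
  Filter.Tendsto (fun N : ℕ => (({n | n ∈ S ∧ n ≤ N} : Set ℕ).ncard : ℝ) / N)
    Filter.atTop (nhds α)

/-- `f` is weakly super-multiplicative: for every `n` and `ε > 0` there exist
`x₀ > 0` and `δ > 0` such that for all `x > x₀` the number of integers
`m ∈ [x, (1+ε)x]` with `f(nm) ≥ (1-ε) f(n) f(m)` is at least `δ x`. -/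
def WeaklySuperMult (f : ℕ → ℝ) : Prop :=
  ∀ n : ℕ, 0 < n → ∀ ε : ℝ, 0 < ε → ∃ x₀ : ℝ, 0 < x₀ ∧ ∃ δ : ℝ, 0 < δ ∧
    ∀ x : ℝ, x₀ < x →
      δ * x ≤
        (({m : ℕ | (x ≤ (m : ℝ) ∧ (m : ℝ) ≤ (1 + ε) * x) ∧
            (1 - ε) * f n * f m ≤ f (n * m)} : Set ℕ).ncard : ℝ)

/-- `f` has normal order `g`: for every `ε > 0` the set
`{n : |f(n) - g(n)| ≥ ε g(n)}` has upper density `0`. -/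
def HasNormalOrder (f : ℕ → ℝ) (g : ℝ → ℝ) : Prop :=
  ∀ ε : ℝ, 0 < ε → upperDensity {n : ℕ | ε * g n ≤ |f n - g n|} = 0

/-- The essential limit of a sequence `a : ℕ → EReal` is `L`:
if `L = ⊤`, every set `{n : aₙ < M}` has density `0`; if `L` is a real number `l`,
for every `ε > 0` the set `{n : |aₙ - l| > ε}` has density `0`. -/
def EssLimitTo (a : ℕ → EReal) (L : EReal) : Prop :=
  (L = ⊤ ∧ ∀ M : ℝ, HasNatDensity {n : ℕ | a n < (M : EReal)} 0) ∨
  (∃ l : ℝ, L = (l : EReal) ∧ ∀ ε : ℝ, 0 < ε →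
    HasNatDensity
      {n : ℕ | a n < ((l - ε : ℝ) : EReal) ∨ ((l + ε : ℝ) : EReal) < a n} 0)

/-- `log f(n) / log n` as an extended real number, with the convention
`log 0 = -∞`. -/
noncomputable def logRatio (f : ℕ → ℝ) (n : ℕ) : EReal :=
  if f n = 0 then ⊥ else ((Real.log (f n) / Real.log n : ℝ) : EReal)

/-- `g` is log-uniformly continuous: for every `ε > 0` there is `δ > 0` such that
`|x/y - 1| < δ` implies `|g(x)/g(y) - 1| < ε` for positive `x, y`. -/
def LogUniformlyContinuous (g : ℝ → ℝ) : Prop :=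
  ∀ ε : ℝ, 0 < ε → ∃ δ : ℝ, 0 < δ ∧ ∀ x y : ℝ, 0 < x → 0 < y →
    |x / y - 1| < δ → |g x / g y - 1| < ε

open Filter Set Real Topology

private lemma wsm_cnt_le (S : Set ℕ) (N : ℕ) :
    (({n | n ∈ S ∧ n ≤ N} : Set ℕ).ncard : ℝ) ≤ (N : ℝ) + 1 := by
  have hsub : {n | n ∈ S ∧ n ≤ N} ⊆ Set.Iic N := fun n hn => hn.2
  have h1 := Set.ncard_le_ncard hsub (Set.finite_Iic N)
  have hIic : (Set.Iic N).ncard = N + 1 := by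
    rw [← Finset.coe_Iic, Set.ncard_coe_finset, Nat.card_Iic]
  rw [hIic] at h1
  exact_mod_cast h1

private lemma wsm_density_tendsto (S : Set ℕ) (h : upperDensity S = 0) :
    Tendsto (fun N : ℕ => (({n | n ∈ S ∧ n ≤ N} : Set ℕ).ncard : ℝ) / N) atTop (𝓝 0) := by
  rw [NormedAddCommGroup.tendsto_nhds_zero]
  intro ε hε
  have hbdd : IsBoundedUnder (· ≤ ·) atTop
      (fun N : ℕ => (({n | n ∈ S ∧ n ≤ N} : Set ℕ).ncard : ℝ) / N) := by
    refine isBoundedUnder_of_eventually_le (a := 2) ?_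
    filter_upwards [eventually_ge_atTop 1] with N hN
    have h1 := wsm_cnt_le S N
    have hN1 : (1:ℝ) ≤ N := by exact_mod_cast hN
    rw [div_le_iff₀ (by linarith)]
    linarith
  have hlim : Filter.limsup (fun N : ℕ => (({n | n ∈ S ∧ n ≤ N} : Set ℕ).ncard : ℝ) / N)
      atTop < ε := by
    rw [show Filter.limsup (fun N : ℕ => (({n | n ∈ S ∧ n ≤ N} : Set ℕ).ncard : ℝ) / N)
      atTop = upperDensity S from rfl, h]; exact hε
  filter_upwards [eventually_lt_of_limsup_lt hlim hbdd, eventually_ge_atTop 1] with N hN hN1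
  have hnn : 0 ≤ (({n | n ∈ S ∧ n ≤ N} : Set ℕ).ncard : ℝ) / N := by positivity
  rwa [Real.norm_eq_abs, abs_of_nonneg hnn]

private lemma wsm_density_count' (S : Set ℕ) (h : upperDensity S = 0) (η : ℝ) (hη : 0 < η) :
    ∃ X : ℝ, 1 ≤ X ∧ ∀ x : ℝ, X ≤ x →
      ((({m | m ∈ S ∧ (m : ℝ) ≤ x} : Set ℕ)).ncard : ℝ) ≤ η * x := by
  have ht := wsm_density_tendsto S h
  have hev : ∀ᶠ N : ℕ in atTop,
      (({n | n ∈ S ∧ n ≤ N} : Set ℕ).ncard : ℝ) / N < η := by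
    filter_upwards [(NormedAddCommGroup.tendsto_nhds_zero.mp ht) η hη] with N hN
    calc (({n | n ∈ S ∧ n ≤ N} : Set ℕ).ncard : ℝ) / N
        ≤ ‖(({n | n ∈ S ∧ n ≤ N} : Set ℕ).ncard : ℝ) / N‖ := le_abs_self _
      _ < η := hN
  obtain ⟨N₀, hN₀⟩ := eventually_atTop.mp hev
  refine ⟨(N₀ : ℝ) + 1, by exact_mod_cast Nat.le_add_left 1 N₀, ?_⟩
  intro x hx
  have hx0 : (0:ℝ) ≤ x := le_trans (by positivity) hx
  have hfl : N₀ + 1 ≤ ⌊x⌋₊ := by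
    rw [Nat.le_floor_iff hx0]; push_cast; linarith
  have hseteq : {m | m ∈ S ∧ (m : ℝ) ≤ x} = {m | m ∈ S ∧ m ≤ ⌊x⌋₊} := by
    ext m; simp only [Set.mem_setOf_eq, Nat.le_floor_iff hx0]
  have hN := hN₀ ⌊x⌋₊ (le_trans (Nat.le_succ _) hfl)
  have hflpos : (0:ℝ) < (⌊x⌋₊ : ℝ) := by
    have : 1 ≤ ⌊x⌋₊ := le_trans (Nat.le_add_left _ _) hfl
    exact_mod_cast this
  have h2 : (({n | n ∈ S ∧ n ≤ ⌊x⌋₊} : Set ℕ).ncard : ℝ) ≤ η * ⌊x⌋₊ := by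
    rw [div_lt_iff₀ hflpos] at hN; linarith
  rw [hseteq]
  calc (({n | n ∈ S ∧ n ≤ ⌊x⌋₊} : Set ℕ).ncard : ℝ) ≤ η * ⌊x⌋₊ := h2
    _ ≤ η * x := by
        have := Nat.floor_le hx0
        nlinarith

private lemma wsm_ss {g : ℝ → ℝ} (hgpos : ∀ x : ℝ, 0 < x → 0 < g x)
    (hgluc : LogUniformlyContinuous g) (ε : ℝ) (hε : 0 < ε) :
    ∃ δ : ℝ, 0 < δ ∧ ∀ x y : ℝ, 0 < x → 0 < y → |y / x - 1| < δ →
      (1 - ε) * g x ≤ g y ∧ g y ≤ (1 + ε) * g x := by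
  obtain ⟨δ, hδ, hd⟩ := hgluc ε hε
  refine ⟨δ, hδ, fun x y hx hy hxy => ?_⟩
  have h := hd y x hy hx hxy
  have hgx := hgpos x hx
  obtain ⟨h1, h2⟩ := abs_lt.mp h
  constructor
  · have : 1 - ε < g y / g x := by linarith
    linarith [(lt_div_iff₀ hgx).mp this]
  · have : g y / g x < 1 + ε := by linarith
    linarith [(div_lt_iff₀ hgx).mp this]

private lemma wsm_chain {g : ℝ → ℝ} (hgpos : ∀ x : ℝ, 0 < x → 0 < g x)
    (hgluc : LogUniformlyContinuous g) (ρ : ℝ) (hρ : 1 ≤ ρ) :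
    ∃ C : ℝ, 1 ≤ C ∧ ∀ x y : ℝ, 0 < x → x ≤ y → y ≤ ρ * x →
      g y ≤ C * g x ∧ g x ≤ C * g y := by
  obtain ⟨δ, hδ, hss⟩ := wsm_ss hgpos hgluc (1/2) (by norm_num)
  obtain ⟨r, hr1, hrδ⟩ : ∃ r : ℝ, 1 < r ∧ r - 1 < δ := by
    refine ⟨1 + min δ 1 / 2, ?_, ?_⟩
    · have hmin : 0 < min δ 1 := lt_min hδ one_pos
      linarith
    · have h1 : min δ 1 ≤ δ := min_le_left _ _
      linarith
  have key : ∀ k : ℕ, ∀ x y : ℝ, 0 < x → x ≤ y → y ≤ r ^ k * x →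
      g y ≤ 2 ^ k * g x ∧ g x ≤ 2 ^ k * g y := by
    intro k
    induction k with
    | zero =>
      intro x y hx hxy hyx
      rw [pow_zero, one_mul] at hyx
      have : y = x := le_antisymm hyx hxy
      subst this; simp
    | succ k ih =>
      intro x y hx hxy hyr
      obtain ⟨z, hz⟩ : ∃ z : ℝ, z = min y (r * x) := ⟨_, rfl⟩
      have hrk1 : (1:ℝ) ≤ r ^ k := one_le_pow₀ (le_of_lt hr1)
      have hxz : x ≤ z := by rw [hz]; exact le_min hxy (by nlinarith)
      have hzrx : z ≤ r * x := by rw [hz]; exact min_le_right _ _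
      have hz0 : 0 < z := lt_of_lt_of_le hx hxz
      have hzy : z ≤ y := by rw [hz]; exact min_le_left _ _
      have hyz : y ≤ r ^ k * z := by
        rcases le_total y (r * x) with hc | hc
        · have hzx : z = y := hz.trans (min_eq_left hc)
          rw [hzx]; nlinarith [lt_of_lt_of_le hx (hxz.trans hzy)]
        · have hzx : z = r * x := hz.trans (min_eq_right hc)
          rw [hzx]
          calc y ≤ r ^ (k+1) * x := hyr
            _ = r ^ k * (r * x) := by ring
      have hstep := hss x z hx hz0 (by
        have h1 : 1 ≤ z / x := (one_le_div hx).mpr hxz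
        have h2 : z / x ≤ r := by rw [div_le_iff₀ hx]; linarith
        rw [abs_of_nonneg (by linarith)]; linarith)
      have hgx := hgpos x hx
      have hgz := hgpos z hz0
      have hgy := hgpos y (lt_of_lt_of_le hz0 hzy)
      obtain ⟨hs1, hs2⟩ := hstep
      obtain ⟨hi1, hi2⟩ := ih z y hz0 hzy hyz
      have h2k : (0:ℝ) < 2 ^ k := by positivity
      constructor
      · calc g y ≤ 2 ^ k * g z := hi1
          _ ≤ 2 ^ k * (2 * g x) := by nlinarith
          _ = 2 ^ (k+1) * g x := by ring
      · calc g x ≤ 2 * g z := by nlinarith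
          _ ≤ 2 * (2 ^ k * g y) := by nlinarith
          _ = 2 ^ (k+1) * g y := by ring
  obtain ⟨k, hk⟩ := pow_unbounded_of_one_lt ρ hr1
  refine ⟨2 ^ k, one_le_pow₀ one_le_two, fun x y hx hxy hyρ => ?_⟩
  exact key k x y hx hxy (by nlinarith [hgpos x hx])

set_option maxHeartbeats 1000000 in
private lemma wsm_L1 {f : ℕ → ℝ} {g : ℝ → ℝ}
    (hf0 : ∀ n, 0 ≤ f n) (hwsm : WeaklySuperMult f)
    (hgpos : ∀ x : ℝ, 0 < x → 0 < g x) (hgluc : LogUniformlyContinuous g)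
    (hno : HasNormalOrder f g)
    (n : ℕ) (hn : 2 ≤ n) (hfn : 0 < f n) (θ : ℝ) (hθ0 : 0 < θ) (hθ1 : θ < 1) :
    ∃ Y : ℝ, 1 ≤ Y ∧ ∀ y : ℝ, Y ≤ y → θ * (f n * g y) ≤ g ((n : ℝ) * y) := by
  set ε₂ : ℝ := (1 - θ) / 5 with hε₂def
  clear_value ε₂
  have hε₂0 : 0 < ε₂ := by simp only [hε₂def]; linarith
  have hε₂1 : ε₂ < 1/5 := by simp only [hε₂def]; linarith
  have hnum4 : θ * (1 + ε₂) ≤ (1 - ε₂)^4 := by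
    have hθε : θ = 1 - 5 * ε₂ := by simp only [hε₂def]; ring
    rw [hθε]
    have hin : (0:ℝ) ≤ 11 - 4*ε₂ + ε₂^2 := by linarith [sq_nonneg ε₂]
    have h := mul_nonneg (sq_nonneg ε₂) hin
    linarith [h]
  obtain ⟨δ, hδ0, hss⟩ := wsm_ss hgpos hgluc ε₂ hε₂0
  set ε : ℝ := min ε₂ (δ/2) with hεdef
  clear_value ε
  have hε0 : 0 < ε := by rw [hεdef]; exact lt_min hε₂0 (by linarith)
  have hεε₂ : ε ≤ ε₂ := by rw [hεdef]; exact min_le_left _ _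
  have hεδ : ε < δ := by rw [hεdef]; exact lt_of_le_of_lt (min_le_right _ _) (by linarith)
  have hε1 : ε < 1 := by linarith
  have hn0 : 0 < n := by omega
  obtain ⟨x₀, hx₀, d, hd0, hA⟩ := hwsm n hn0 ε hε0
  have hBd := hno ε hε0
  set η : ℝ := d / (4 * (1 + ε) * ((n : ℝ) + 1)) with hηdef
  clear_value η
  have hn1 : (1:ℝ) ≤ (n:ℝ) := by exact_mod_cast hn0
  have hη0 : 0 < η := by
    rw [hηdef]; apply div_pos hd0; positivity
  obtain ⟨X, hX1, hB⟩ := wsm_density_count' _ hBd η hη0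
  refine ⟨max (max (x₀ + 1) X) 1, le_max_right _ _, ?_⟩
  intro y hy
  have hy1 : 1 ≤ y := le_trans (le_max_right _ _) hy
  have hy0 : 0 < y := by linarith
  have hyx₀ : x₀ < y := by
    have := le_trans (le_max_left _ _) (le_trans (le_max_left _ _) hy); linarith
  have hyX : X ≤ y := le_trans (le_max_right _ _) (le_trans (le_max_left _ _) hy)
  set A : Set ℕ := {m : ℕ | (y ≤ (m : ℝ) ∧ (m : ℝ) ≤ (1 + ε) * y) ∧
      (1 - ε) * f n * f m ≤ f (n * m)} with hAdef
  clear_value A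
  have hcardA : d * y ≤ (A.ncard : ℝ) := by rw [hAdef]; exact hA y hyx₀
  set B : Set ℕ := {k : ℕ | ε * g k ≤ |f k - g k|} with hBdef
  clear_value B
  set B₁ : Set ℕ := {m : ℕ | m ∈ B ∧ (m : ℝ) ≤ (1 + ε) * y} with hB₁def
  clear_value B₁
  set B₂ : Set ℕ := {m : ℕ | n * m ∈ B ∧ (m : ℝ) ≤ (1 + ε) * y} with hB₂def
  clear_value B₂
  -- finiteness
  have hfinB₁ : B₁.Finite := by
    rw [hB₁def]
    apply Set.Finite.subset (Set.finite_Iic ⌊(1 + ε) * y⌋₊)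
    intro m hm
    exact Nat.le_floor hm.2
  have hfinB₂ : B₂.Finite := by
    rw [hB₂def]
    apply Set.Finite.subset (Set.finite_Iic ⌊(1 + ε) * y⌋₊)
    intro m hm
    exact Nat.le_floor hm.2
  have hB₁card : (B₁.ncard : ℝ) ≤ η * ((1 + ε) * y) := by
    rw [hB₁def]
    exact hB ((1 + ε) * y) (by linarith [mul_pos hε0 hy0])
  have hB₂card : (B₂.ncard : ℝ) ≤ η * ((n : ℝ) * ((1 + ε) * y)) := by
    have hinj : Function.Injective (fun m : ℕ => n * m) := fun a b h => by
      simpa [Nat.mul_right_cancel_iff hn0] using Nat.eq_of_mul_eq_mul_left hn0 h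
    have himg : (fun m : ℕ => n * m) '' B₂ ⊆
        {k : ℕ | k ∈ B ∧ (k : ℝ) ≤ (n : ℝ) * ((1 + ε) * y)} := by
      rw [hB₂def]
      rintro k ⟨m, ⟨hmB, hmle⟩, rfl⟩
      refine ⟨hmB, ?_⟩
      push_cast
      exact mul_le_mul_of_nonneg_left hmle (by positivity)
    have h1 : B₂.ncard = ((fun m : ℕ => n * m) '' B₂).ncard :=
      (Set.ncard_image_of_injective B₂ hinj).symm
    have hfin2 : {k : ℕ | k ∈ B ∧ (k : ℝ) ≤ (n : ℝ) * ((1 + ε) * y)}.Finite := by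
      apply Set.Finite.subset (Set.finite_Iic ⌊(n : ℝ) * ((1 + ε) * y)⌋₊)
      intro m hm
      exact Nat.le_floor hm.2
    have h2 := Set.ncard_le_ncard himg hfin2
    have hny : y ≤ (n : ℝ) * ((1 + ε) * y) := by
      have h4 : (1:ℝ) * (1 + ε) ≤ (n:ℝ) * (1 + ε) :=
        mul_le_mul_of_nonneg_right hn1 (by linarith)
      have h5 := mul_le_mul_of_nonneg_right h4 hy0.le
      have h6 := mul_pos hε0 hy0
      linarith
    have h3 := hB ((n : ℝ) * ((1 + ε) * y)) (le_trans hyX hny)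
    rw [h1]
    calc ((((fun m : ℕ => n * m) '' B₂).ncard : ℕ) : ℝ)
        ≤ ({k : ℕ | k ∈ B ∧ (k : ℝ) ≤ (n : ℝ) * ((1 + ε) * y)}.ncard : ℝ) := by
          exact_mod_cast h2
      _ ≤ η * ((n : ℝ) * ((1 + ε) * y)) := h3
  have hsum : η * ((1 + ε) * y) + η * ((n : ℝ) * ((1 + ε) * y)) ≤ d * y / 2 := by
    have hkey : η * ((1 + ε) * ((n : ℝ) + 1)) = d / 4 := by
      rw [hηdef]; field_simp
    have h6 : η * ((1 + ε) * y) + η * ((n : ℝ) * ((1 + ε) * y))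
        = (η * ((1 + ε) * ((n : ℝ) + 1))) * y := by ring
    rw [h6, hkey]
    linarith [mul_pos hd0 hy0]
  have hbad : ((B₁ ∪ B₂).ncard : ℝ) ≤ d * y / 2 := by
    have := Set.ncard_union_le B₁ B₂
    have hc : ((B₁ ∪ B₂).ncard : ℝ) ≤ (B₁.ncard : ℝ) + (B₂.ncard : ℝ) := by exact_mod_cast this
    linarith
  have hgood : (A \ (B₁ ∪ B₂)).Nonempty := by
    have hfinU := hfinB₁.union hfinB₂
    have hle := Set.ncard_le_ncard_diff_add_ncard A (B₁ ∪ B₂) hfinU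
    have hler : (A.ncard : ℝ) ≤ ((A \ (B₁ ∪ B₂)).ncard : ℝ) + ((B₁ ∪ B₂).ncard : ℝ) := by
      exact_mod_cast hle
    have hpos : 0 < ((A \ (B₁ ∪ B₂)).ncard : ℝ) := by
      have hy2 : d * y / 2 < d * y := by linarith [mul_pos hd0 hy0]
      linarith
    have : (A \ (B₁ ∪ B₂)).ncard ≠ 0 := by
      intro h0; rw [h0] at hpos; simp at hpos
    exact Set.nonempty_of_ncard_ne_zero this
  obtain ⟨m, hmA, hmBad⟩ := hgood
  rw [hAdef] at hmA
  obtain ⟨⟨hm1, hm2⟩, hm3⟩ := hmA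
  have hmB : m ∉ B := by
    intro h
    exact hmBad (Set.mem_union_left _ (by rw [hB₁def]; exact ⟨h, hm2⟩))
  have hnmB : n * m ∉ B := by
    intro h
    exact hmBad (Set.mem_union_right _ (by rw [hB₂def]; exact ⟨h, hm2⟩))
  have hm0 : (0:ℝ) < (m : ℝ) := by linarith
  have hgm : 0 < g m := hgpos _ hm0
  have hnm0 : (0:ℝ) < ((n * m : ℕ) : ℝ) := by
    push_cast
    exact mul_pos (by exact_mod_cast hn0) (lt_of_lt_of_le hy0 hm1)
  have hgnm : 0 < g ((n * m : ℕ) : ℝ) := hgpos _ hnm0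
  have hgy : 0 < g y := hgpos _ hy0
  have hgny : 0 < g ((n:ℝ) * y) := hgpos _ (mul_pos (by exact_mod_cast hn0) hy0)
  -- consequences of not being in B
  have hmB' : |f m - g m| < ε * g m := by
    rw [hBdef] at hmB; simp only [Set.mem_setOf_eq, not_le] at hmB; exact hmB
  have hnmB' : |f (n*m) - g ((n*m : ℕ) : ℝ)| < ε * g ((n*m : ℕ) : ℝ) := by
    rw [hBdef] at hnmB; simp only [Set.mem_setOf_eq, not_le] at hnmB; exact hnmB
  have hfm_low : (1 - ε) * g m ≤ f m := by
    have := (abs_lt.mp hmB').1; linarith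
  have hfnm_up : f (n*m) ≤ (1 + ε) * g ((n*m : ℕ) : ℝ) := by
    have := (abs_lt.mp hnmB').2; linarith
  -- one-step comparisons via log-uniform continuity
  have hssm := hss y (m : ℝ) hy0 hm0 (by
    have h7 : (m:ℝ)/y ≤ 1 + ε := by rw [div_le_iff₀ hy0]; linarith [hm2]
    rw [abs_of_nonneg (by rw [sub_nonneg]; exact (one_le_div hy0).mpr hm1)]
    linarith [h7, hεδ])
  have hgm_low : (1 - ε₂) * g y ≤ g m := hssm.1
  have hcast : ((n * m : ℕ) : ℝ) = (n : ℝ) * (m : ℝ) := by push_cast; ring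
  have hssnm := hss ((n * m : ℕ) : ℝ) ((n:ℝ) * y) hnm0
      (mul_pos (by exact_mod_cast hn0) hy0) (by
    rw [hcast]
    have hne : (n:ℝ) * (m:ℝ) ≠ 0 := by positivity
    have heq : (n:ℝ) * y / ((n:ℝ) * (m:ℝ)) = y / (m:ℝ) := by
      field_simp
    rw [heq, abs_of_nonpos (by
      rw [sub_nonpos]
      exact div_le_one_of_le₀ hm1 hm0.le)]
    have h8 : (m:ℝ) - y ≤ ε * (m:ℝ) := by
      have h9 := mul_le_mul_of_nonneg_left hm1 hε0.le
      linarith [hm2]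
    have h10 : (1 - ε) * (m:ℝ) ≤ y := by linarith
    have h11 : 1 - ε ≤ y / (m:ℝ) := (le_div_iff₀ hm0).mpr h10
    have h1 : 1 - y / (m:ℝ) ≤ ε := by linarith
    linarith)
  have hgny_low : (1 - ε₂) * g ((n*m : ℕ) : ℝ) ≤ g ((n:ℝ) * y) := hssnm.1
  -- numeric chain
  have c1 : (1 - ε) * ((1 - ε₂) * (f n * g y)) ≤ f n * f m := by
    have h1 : f n * ((1-ε₂) * g y) ≤ f n * g m := by
      apply mul_le_mul_of_nonneg_left hgm_low hfn.le
    have h2 : f n * ((1-ε) * g m) ≤ f n * f m := by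
      apply mul_le_mul_of_nonneg_left hfm_low hfn.le
    calc (1 - ε) * ((1 - ε₂) * (f n * g y)) = (1-ε) * (f n * ((1-ε₂) * g y)) := by ring
      _ ≤ (1-ε) * (f n * g m) := mul_le_mul_of_nonneg_left h1 (by linarith)
      _ = f n * ((1-ε) * g m) := by ring
      _ ≤ f n * f m := h2
  have c2 : (1 - ε) * ((1 - ε) * ((1 - ε₂) * (f n * g y))) ≤ f (n * m) := by
    have := mul_le_mul_of_nonneg_left c1 (by linarith : (0:ℝ) ≤ 1 - ε)
    calc (1 - ε) * ((1 - ε) * ((1 - ε₂) * (f n * g y)))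
        ≤ (1 - ε) * (f n * f m) := this
      _ = (1 - ε) * f n * f m := by ring
      _ ≤ f (n * m) := hm3
  have c3 : (1 - ε₂) * ((1 - ε) * ((1 - ε) * ((1 - ε₂) * (f n * g y))))
      ≤ (1 + ε) * g ((n:ℝ) * y) := by
    have h1 : (1 - ε₂) * f (n*m) ≤ (1 - ε₂) * ((1 + ε) * g ((n*m : ℕ) : ℝ)) :=
      mul_le_mul_of_nonneg_left hfnm_up (by linarith)
    have h2 : (1 + ε) * ((1 - ε₂) * g ((n*m : ℕ) : ℝ)) ≤ (1 + ε) * g ((n:ℝ) * y) :=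
      mul_le_mul_of_nonneg_left hgny_low (by linarith)
    have h3 := mul_le_mul_of_nonneg_left c2 (by linarith : (0:ℝ) ≤ 1 - ε₂)
    calc (1 - ε₂) * ((1 - ε) * ((1 - ε) * ((1 - ε₂) * (f n * g y))))
        ≤ (1 - ε₂) * f (n * m) := h3
      _ ≤ (1 - ε₂) * ((1 + ε) * g ((n*m : ℕ) : ℝ)) := h1
      _ = (1 + ε) * ((1 - ε₂) * g ((n*m : ℕ) : ℝ)) := by ring
      _ ≤ (1 + ε) * g ((n:ℝ) * y) := h2
  have hfngy : 0 ≤ f n * g y := by positivity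
  have hfinal : (1 + ε) * (θ * (f n * g y)) ≤ (1 + ε) * g ((n:ℝ) * y) := by
    have hnum : θ * (1 + ε) ≤ (1 - ε₂) * ((1 - ε) * ((1 - ε) * (1 - ε₂))) := by
      have ha : (0:ℝ) ≤ 1 - ε₂ := by linarith
      have hb : 1 - ε₂ ≤ 1 - ε := by linarith
      have hsq : (1-ε₂)*(1-ε₂) ≤ (1-ε)*(1-ε) := mul_self_le_mul_self ha hb
      have h4a := mul_le_mul_of_nonneg_left hsq (mul_self_nonneg (1-ε₂))
      have hθb : θ*(1+ε) ≤ θ*(1+ε₂) := mul_le_mul_of_nonneg_left (by linarith) hθ0.le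
      linarith [hnum4, h4a, hθb]
    calc (1 + ε) * (θ * (f n * g y)) = (θ * (1 + ε)) * (f n * g y) := by ring
      _ ≤ ((1 - ε₂) * ((1 - ε) * ((1 - ε) * (1 - ε₂)))) * (f n * g y) :=
          mul_le_mul_of_nonneg_right hnum hfngy
      _ = (1 - ε₂) * ((1 - ε) * ((1 - ε) * ((1 - ε₂) * (f n * g y)))) := by ring
      _ ≤ (1 + ε) * g ((n:ℝ) * y) := c3
  exact le_of_mul_le_mul_left hfinal (by linarith)

set_option maxHeartbeats 1000000 in
private lemma wsm_L2 {f : ℕ → ℝ} {g : ℝ → ℝ}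
    (hf0 : ∀ n, 0 ≤ f n) (hwsm : WeaklySuperMult f)
    (hgpos : ∀ x : ℝ, 0 < x → 0 < g x) (hgluc : LogUniformlyContinuous g)
    (hno : HasNormalOrder f g)
    (n : ℕ) (hn : 2 ≤ n) (hfn : 0 < f n) (ε : ℝ) (hε : 0 < ε) :
    ∃ Z : ℝ, 2 ≤ Z ∧ ∀ z : ℝ, Z ≤ z →
      (Real.log (f n) / Real.log n - ε) * Real.log z ≤ Real.log (g z) := by
  have hn1 : (1:ℝ) < (n:ℝ) := by exact_mod_cast hn
  have hn0 : (0:ℝ) < (n:ℝ) := by linarith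
  have ha0 : 0 < Real.log n := Real.log_pos hn1
  obtain ⟨a, hadef⟩ : ∃ a : ℝ, a = Real.log n := ⟨_, rfl⟩
  obtain ⟨c, hcdef⟩ : ∃ c : ℝ, c = Real.log (f n) := ⟨_, rfl⟩
  rw [← hadef] at ha0
  obtain ⟨θ, hθdef⟩ : ∃ θ : ℝ, θ = Real.exp (-(ε * a / 2)) := ⟨_, rfl⟩
  have hθ0 : 0 < θ := hθdef ▸ Real.exp_pos _
  have hθ1 : θ < 1 := by
    rw [hθdef]
    apply Real.exp_lt_one_iff.mpr
    have := mul_pos hε ha0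
    linarith
  have hlogθ : Real.log θ = -(ε * a / 2) := by rw [hθdef, Real.log_exp]
  obtain ⟨Y, hY1, hL1⟩ := wsm_L1 hf0 hwsm hgpos hgluc hno n hn hfn θ hθ0 hθ1
  have hY0 : 0 < Y := by linarith
  obtain ⟨C, hC1, hCH⟩ := wsm_chain hgpos hgluc (n : ℝ) (by linarith)
  have hC0 : 0 < C := by linarith
  -- iteration
  have hiter : ∀ k : ℕ, ∀ y : ℝ, Y ≤ y → (θ * f n)^k * g y ≤ g ((n:ℝ)^k * y) := by
    intro k
    induction k with
    | zero => intro y hy; simp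
    | succ k ih =>
      intro y hy
      have hy0 : 0 < y := by linarith
      have hpk : (1:ℝ) ≤ (n:ℝ)^k := one_le_pow₀ hn1.le
      have h1 := ih y hy
      have harg : Y ≤ (n:ℝ)^k * y := le_trans hy (le_mul_of_one_le_left hy0.le hpk)
      have h2 := hL1 ((n:ℝ)^k * y) harg
      calc (θ * f n)^(k+1) * g y = (θ * f n) * ((θ * f n)^k * g y) := by ring
        _ ≤ (θ * f n) * g ((n:ℝ)^k * y) :=
            mul_le_mul_of_nonneg_left h1 (by positivity)
        _ = θ * (f n * g ((n:ℝ)^k * y)) := by ring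
        _ ≤ g ((n:ℝ) * ((n:ℝ)^k * y)) := h2
        _ = g ((n:ℝ)^(k+1) * y) := by rw [show (n:ℝ) * ((n:ℝ)^k * y) = (n:ℝ)^(k+1) * y by ring]
  -- constants
  obtain ⟨q, hqdef⟩ : ∃ q : ℝ, q = c / a := ⟨_, rfl⟩
  have hc : c = q * a := by rw [hqdef]; field_simp
  obtain ⟨B, hBdef⟩ : ∃ B : ℝ, B = q - ε/2 := ⟨_, rfl⟩
  obtain ⟨lY, hlYdef⟩ : ∃ lY : ℝ, lY = Real.log Y := ⟨_, rfl⟩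
  have hlY0 : 0 ≤ lY := hlYdef ▸ Real.log_nonneg hY1
  obtain ⟨lgY, hlgYdef⟩ : ∃ lgY : ℝ, lgY = Real.log (g Y) := ⟨_, rfl⟩
  obtain ⟨lC, hlCdef⟩ : ∃ lC : ℝ, lC = Real.log C := ⟨_, rfl⟩
  have hlC0 : 0 ≤ lC := hlCdef ▸ Real.log_nonneg hC1
  obtain ⟨Q, hQdef⟩ : ∃ Q : ℝ, Q = (lY + a) * |B| := ⟨_, rfl⟩
  have hQ0 : 0 ≤ Q := hQdef ▸ mul_nonneg (by linarith) (abs_nonneg _)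
  refine ⟨max 2 (max Y (Real.exp ((2/ε) * (Q + |lgY| + lC) + 1))), le_max_left _ _, ?_⟩
  intro z hz
  have hz2 : (2:ℝ) ≤ z := le_trans (le_max_left _ _) hz
  have hz0 : 0 < z := by linarith
  have hzY : Y ≤ z := le_trans (le_max_left _ _) (le_trans (le_max_right _ _) hz)
  have hzE : Real.exp ((2/ε) * (Q + |lgY| + lC) + 1) ≤ z :=
    le_trans (le_max_right _ _) (le_trans (le_max_right _ _) hz)
  obtain ⟨lz, hlzdef⟩ : ∃ lz : ℝ, lz = Real.log z := ⟨_, rfl⟩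
  have hlzE : (2/ε) * (Q + |lgY| + lC) + 1 ≤ lz := by
    rw [hlzdef, ← Real.log_exp ((2/ε) * (Q + |lgY| + lC) + 1)]
    exact (Real.log_le_log_iff (Real.exp_pos _) hz0).mpr hzE
  have hlz0 : 0 < lz := by
    rw [hlzdef]; exact Real.log_pos (by linarith)
  have hεlz : Q - lgY + lC ≤ (ε/2) * lz := by
    have h1 := mul_le_mul_of_nonneg_left hlzE (by positivity : (0:ℝ) ≤ ε/2)
    have h2 : (ε/2) * ((2/ε) * (Q + |lgY| + lC) + 1) = (Q + |lgY| + lC) + ε/2 := by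
      field_simp
    rw [h2] at h1
    have h3 : -lgY ≤ |lgY| := neg_le_abs _
    linarith
  -- choice of k and y
  obtain ⟨w, hwdef⟩ : ∃ w : ℝ, w = (lz - lY) / a := ⟨_, rfl⟩
  have hw0 : 0 ≤ w := by
    rw [hwdef]
    apply div_nonneg _ ha0.le
    have : lY ≤ lz := by
      rw [hlYdef, hlzdef]
      exact (Real.log_le_log_iff hY0 hz0).mpr hzY
    linarith
  obtain ⟨k, hkdef⟩ : ∃ k : ℕ, k = ⌊w⌋₊ := ⟨_, rfl⟩
  have hk1 : (k:ℝ) ≤ w := hkdef ▸ Nat.floor_le hw0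
  have hk2 : w < (k:ℝ) + 1 := by rw [hkdef]; exact Nat.lt_floor_add_one w
  have hka1 : (k:ℝ) * a ≤ lz - lY := by
    have := mul_le_mul_of_nonneg_right hk1 ha0.le
    rw [hwdef] at this
    calc (k:ℝ) * a ≤ (lz - lY)/a * a := this
      _ = lz - lY := by field_simp
  have hka2 : lz - lY - a < (k:ℝ) * a := by
    have h4 : w * a = lz - lY := by rw [hwdef]; field_simp
    have h5 := mul_lt_mul_of_pos_right hk2 ha0
    nlinarith [h4, h5]
  have hnk0 : (0:ℝ) < (n:ℝ)^k := by positivity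
  obtain ⟨y, hydef⟩ : ∃ y : ℝ, y = z / (n:ℝ)^k := ⟨_, rfl⟩
  have hy0 : 0 < y := hydef ▸ div_pos hz0 hnk0
  have hzeq : (n:ℝ)^k * y = z := by rw [hydef]; field_simp
  have hly : Real.log y = lz - (k:ℝ) * a := by
    rw [hydef, Real.log_div hz0.ne' hnk0.ne', Real.log_pow, ← hadef, ← hlzdef]
  have hyY : Y ≤ y := by
    have hlog : Real.log Y ≤ Real.log y := by
      rw [hly, ← hlYdef]; linarith
    exact (Real.log_le_log_iff hY0 hy0).mp hlog
  have hyNY : y ≤ (n:ℝ) * Y := by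
    have hlognY : Real.log ((n:ℝ) * Y) = a + lY := by
      rw [Real.log_mul hn0.ne' hY0.ne', hadef, hlYdef]
    have hlog : Real.log y ≤ Real.log ((n:ℝ) * Y) := by
      rw [hly, hlognY]
      linarith
    exact (Real.log_le_log_iff hy0 (by positivity)).mp hlog
  have hgY_le : g Y ≤ C * g y := (hCH Y y hY0 hyY hyNY).2
  have hgy0 : 0 < g y := hgpos _ hy0
  have hlgy : lgY - lC ≤ Real.log (g y) := by
    have hd : g Y / C ≤ g y := (div_le_iff₀ hC0).mpr (by linarith [hgY_le])
    have := (Real.log_le_log_iff (div_pos (hgpos _ hY0) hC0) hgy0).mpr hd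
    rwa [Real.log_div (hgpos _ hY0).ne' hC0.ne', ← hlgYdef, ← hlCdef] at this
  -- take logs of the iterate
  have hit := hiter k y hyY
  rw [hzeq] at hit
  have hgz0 : 0 < g z := hgpos _ hz0
  have hθfn : 0 < θ * f n := mul_pos hθ0 hfn
  have hlog1 : Real.log ((θ * f n)^k * g y) ≤ Real.log (g z) :=
    (Real.log_le_log_iff (by positivity) hgz0).mpr hit
  have hlog2 : Real.log ((θ * f n)^k * g y)
      = (k:ℝ) * (Real.log θ + c) + Real.log (g y) := by
    rw [Real.log_mul (by positivity) hgy0.ne', Real.log_pow,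
      Real.log_mul hθ0.ne' hfn.ne', ← hcdef]
  have hkc : (k:ℝ) * (Real.log θ + c) = ((k:ℝ) * a) * B := by
    rw [hlogθ, hc, hBdef]; ring
  -- lower bound for (k*a)*B
  have huB : lz * B - Q ≤ ((k:ℝ) * a) * B := by
    rcases le_or_gt 0 B with hB0 | hB0
    · have h5 := mul_le_mul_of_nonneg_right hka2.le hB0
      have h6 : (lY + a) * B ≤ Q := by
        rw [hQdef]
        exact mul_le_mul_of_nonneg_left (le_abs_self B) (by linarith)
      linarith [h5, h6]
    · have h5 := mul_le_mul_of_nonpos_right hka1 hB0.le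
      have h7 : lY * B ≤ 0 := mul_nonpos_of_nonneg_of_nonpos hlY0 hB0.le
      linarith [h5, h7, hQ0]
  -- conclude
  rw [← hcdef, ← hadef, ← hqdef, ← hlzdef]
  have hfinal : (q - ε) * lz ≤ Real.log (g z) := by
    have h8 : ((k:ℝ) * a) * B + (lgY - lC) ≤ Real.log (g z) := by
      calc ((k:ℝ) * a) * B + (lgY - lC)
          = (k:ℝ) * (Real.log θ + c) + (lgY - lC) := by rw [hkc]
        _ ≤ (k:ℝ) * (Real.log θ + c) + Real.log (g y) := by linarith
        _ = Real.log ((θ * f n)^k * g y) := hlog2.symm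
        _ ≤ Real.log (g z) := hlog1
    have h9 : lz * B = q * lz - (ε/2) * lz := by rw [hBdef]; ring
    linarith
  linarith [hfinal]

set_option maxHeartbeats 1000000 in
private lemma wsm_L3 {g : ℝ → ℝ}
    (hgpos : ∀ x : ℝ, 0 < x → 0 < g x) (hgluc : LogUniformlyContinuous g) :
    ∃ C : ℝ, ∀ z : ℝ, 2 ≤ z → Real.log (g z) ≤ C * Real.log z := by
  obtain ⟨C₂, hC₂1, hCH⟩ := wsm_chain hgpos hgluc 2 one_le_two
  have hC₂0 : 0 < C₂ := by linarith
  have key : ∀ k : ℕ, ∀ z : ℝ, 1 ≤ z → z ≤ 2^k → g z ≤ C₂^k * g 1 := by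
    intro k
    induction k with
    | zero =>
      intro z h1 h2
      rw [pow_zero] at h2
      have : z = 1 := le_antisymm h2 h1
      subst this; simp
    | succ k ih =>
      intro z h1 h2
      obtain ⟨w, hwdef⟩ : ∃ w : ℝ, w = max 1 (z/2) := ⟨_, rfl⟩
      have hw1 : 1 ≤ w := hwdef ▸ le_max_left _ _
      have hpk : (1:ℝ) ≤ 2^k := one_le_pow₀ one_le_two
      have hwk : w ≤ 2^k := by
        rw [hwdef]
        apply max_le hpk
        rw [pow_succ] at h2
        linarith
      have hwz : w ≤ z := by
        rw [hwdef]
        apply max_le h1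
        linarith
      have hz2w : z ≤ 2 * w := by
        rcases le_total z 2 with hc | hc
        · have : (1:ℝ) ≤ w := hw1
          linarith
        · have : z/2 ≤ w := hwdef ▸ le_max_right _ _
          linarith
      have hstep := (hCH w z (by linarith) hwz hz2w).1
      have hihw := ih w hw1 hwk
      have hgw0 := hgpos w (by linarith)
      calc g z ≤ C₂ * g w := hstep
        _ ≤ C₂ * (C₂^k * g 1) := mul_le_mul_of_nonneg_left hihw hC₂0.le
        _ = C₂^(k+1) * g 1 := by ring
  refine ⟨(2 * Real.log C₂ + |Real.log (g 1)|) / Real.log 2, ?_⟩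
  intro z hz2
  have hz0 : 0 < z := by linarith
  have hl2 : 0 < Real.log 2 := Real.log_pos one_lt_two
  have hlz2 : Real.log 2 ≤ Real.log z := (Real.log_le_log_iff two_pos hz0).mpr hz2
  have hlz0 : 0 < Real.log z := lt_of_lt_of_le hl2 hlz2
  obtain ⟨k, hkdef⟩ : ∃ k : ℕ, k = ⌈Real.log z / Real.log 2⌉₊ := ⟨_, rfl⟩
  have hk1 : Real.log z / Real.log 2 ≤ (k:ℝ) := hkdef ▸ Nat.le_ceil _
  have hk2 : (k:ℝ) < Real.log z / Real.log 2 + 1 := by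
    rw [hkdef]
    exact Nat.ceil_lt_add_one (by positivity)
  have hzk : z ≤ 2^k := by
    have hl : Real.log z ≤ Real.log ((2:ℝ)^k) := by
      rw [Real.log_pow]
      calc Real.log z = (Real.log z / Real.log 2) * Real.log 2 := by field_simp
        _ ≤ (k:ℝ) * Real.log 2 := mul_le_mul_of_nonneg_right hk1 hl2.le
    exact (Real.log_le_log_iff hz0 (by positivity)).mp hl
  have hkey := key k z (by linarith) hzk
  have hgz0 := hgpos z hz0
  have hg10 := hgpos 1 one_pos
  have hlog : Real.log (g z) ≤ (k:ℝ) * Real.log C₂ + Real.log (g 1) := by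
    have := (Real.log_le_log_iff hgz0 (by positivity)).mpr hkey
    rwa [Real.log_mul (by positivity) hg10.ne', Real.log_pow] at this
  obtain ⟨t, htdef⟩ : ∃ t : ℝ, t = Real.log z / Real.log 2 := ⟨_, rfl⟩
  have ht1 : 1 ≤ t := by
    rw [htdef]
    exact (one_le_div hl2).mpr hlz2
  have hlzt : Real.log z = t * Real.log 2 := by rw [htdef]; field_simp
  have hlC₂0 : 0 ≤ Real.log C₂ := Real.log_nonneg hC₂1
  have hgoal : (2 * Real.log C₂ + |Real.log (g 1)|) / Real.log 2 * Real.log z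
      = (2 * Real.log C₂ + |Real.log (g 1)|) * t := by
    rw [hlzt]; field_simp
  rw [hgoal]
  rw [← htdef] at hk2
  have h5 : (t - 1) * Real.log C₂ ≥ 0 := mul_nonneg (by linarith) hlC₂0
  have h6 : Real.log (g 1) ≤ |Real.log (g 1)| := le_abs_self _
  have h7 : |Real.log (g 1)| ≤ |Real.log (g 1)| * t :=
    le_mul_of_one_le_right (abs_nonneg _) ht1
  have h8 : (k:ℝ) * Real.log C₂ ≤ (t + 1) * Real.log C₂ :=
    mul_le_mul_of_nonneg_right (by linarith) hlC₂0
  nlinarith [h5, h6, h7, h8, hlog]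

private lemma wsm_interval_card (ε x : ℝ) (hε : 0 < ε) (hx : 1 ≤ x) :
    ε * x - 2 ≤ (({m : ℕ | x ≤ (m:ℝ) ∧ (m:ℝ) ≤ (1+ε) * x} : Set ℕ).ncard : ℝ) := by
  have hx0 : (0:ℝ) < x := by linarith
  rcases le_or_gt (ε * x) 2 with hc | hc
  · have : (0:ℝ) ≤ (({m : ℕ | x ≤ (m:ℝ) ∧ (m:ℝ) ≤ (1+ε) * x} : Set ℕ).ncard : ℝ) := by
      positivity
    linarith
  · obtain ⟨a, hadef⟩ : ∃ a : ℕ, a = ⌈x⌉₊ := ⟨_, rfl⟩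
    obtain ⟨b, hbdef⟩ : ∃ b : ℕ, b = ⌊(1+ε)*x⌋₊ := ⟨_, rfl⟩
    have hseteq : {m : ℕ | x ≤ (m:ℝ) ∧ (m:ℝ) ≤ (1+ε) * x} = ↑(Finset.Icc a b) := by
      ext m
      simp only [Set.mem_setOf_eq, Finset.coe_Icc, Set.mem_Icc, hadef, hbdef,
        Nat.ceil_le, Nat.le_floor_iff (by positivity : (0:ℝ) ≤ (1+ε)*x)]
    rw [hseteq, Set.ncard_coe_finset, Nat.card_Icc]
    have ha : (a:ℝ) < x + 1 := by rw [hadef]; exact Nat.ceil_lt_add_one hx0.le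
    have hb : (1+ε)*x - 1 < (b:ℝ) := by rw [hbdef]; exact Nat.sub_one_lt_floor _
    have hab : a ≤ b + 1 := by
      have h1 : (a:ℝ) ≤ ((b+1 : ℕ):ℝ) := by push_cast; linarith
      exact_mod_cast h1
    rw [Nat.cast_sub hab]
    push_cast
    linarith


set_option maxHeartbeats 1000000 in
/-- Theorem (log-uniformly continuous case): if `f : ℕ → [0,∞)` is weakly super-multiplicative and has
a strictly positive, log-uniformly continuous normal order `g`, then
`sup_{n ≥ 2} log f(n) / log n = lim ess log f(n) / log n`. -/
theorem weakly_supermult_normal_order_logUniformlyContinuous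
    (f : ℕ → ℝ) (g : ℝ → ℝ)
    (hf0 : ∀ n, 0 ≤ f n)
    (hwsm : WeaklySuperMult f)
    (hgpos : ∀ x : ℝ, 0 < x → 0 < g x)
    (hgluc : LogUniformlyContinuous g)
    (hno : HasNormalOrder f g) :
    EssLimitTo (logRatio f) (⨆ n ∈ Set.Ici (2 : ℕ), logRatio f n) := by
  classical
  have hB2 := hno (1/2) (by norm_num)
  -- existence of a good n₀ ≥ 2 with f n₀ > 0
  obtain ⟨n₀, hn₀2, hn₀f⟩ : ∃ n₀ : ℕ, 2 ≤ n₀ ∧ 0 < f n₀ := by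
    obtain ⟨X₂, hX₂1, hB2c⟩ := wsm_density_count' _ hB2 (1/4) (by norm_num)
    by_contra hcon
    push_neg at hcon
    obtain ⟨N, hNdef⟩ : ∃ N : ℕ, N = ⌈max X₂ 8⌉₊ := ⟨_, rfl⟩
    have hN8 : (8:ℝ) ≤ (N:ℝ) := by
      rw [hNdef]
      exact le_trans (le_max_right _ _) (Nat.le_ceil _)
    have hNX : X₂ ≤ (N:ℝ) := by
      rw [hNdef]
      exact le_trans (le_max_left _ _) (Nat.le_ceil _)
    have hsub : Set.Icc 2 N ⊆
        {m : ℕ | m ∈ {k : ℕ | 1/2 * g k ≤ |f k - g k|} ∧ (m:ℝ) ≤ (N:ℝ)} := by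
      intro m hm
      obtain ⟨hm2, hmN⟩ := hm
      have hfm : f m = 0 := le_antisymm (hcon m hm2) (hf0 m)
      have hm0 : (0:ℝ) < (m:ℝ) := by
        have : (1:ℕ) ≤ m := by omega
        exact_mod_cast this
      have hgm := hgpos _ hm0
      constructor
      · show 1/2 * g m ≤ |f m - g m|
        rw [hfm]
        rw [abs_of_nonpos (by linarith)]
        linarith
      · exact_mod_cast hmN
    have h1 := hB2c (N:ℝ) hNX
    have h2 := Set.ncard_le_ncard hsub (by
      apply Set.Finite.subset (Set.finite_Iic N)
      intro m hm
      have := hm.2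
      simp only [Set.mem_Iic]
      exact_mod_cast this)
    have h3 : (Set.Icc 2 N).ncard = N - 1 := by
      rw [← Finset.coe_Icc, Set.ncard_coe_finset, Nat.card_Icc]
      omega
    have hN2 : 2 ≤ N := by
      have : (2:ℝ) ≤ (N:ℝ) := by linarith
      exact_mod_cast this
    have h4 : ((N:ℝ)) - 1 ≤ (({m : ℕ | m ∈ {k : ℕ | 1/2 * g k ≤ |f k - g k|} ∧
        (m:ℝ) ≤ (N:ℝ)} : Set ℕ).ncard : ℝ) := by
      calc ((N:ℝ)) - 1 = ((N - 1 : ℕ) : ℝ) := by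
            have : 1 ≤ N := by omega
            push_cast [this]
            ring
        _ = ((Set.Icc 2 N).ncard : ℝ) := by rw [h3]
        _ ≤ _ := by exact_mod_cast h2
    linarith
  -- the supremum L
  obtain ⟨L, hLdef⟩ : ∃ L : EReal, L = ⨆ n ∈ Set.Ici (2 : ℕ), logRatio f n := ⟨_, rfl⟩
  rw [← hLdef]
  have hle_iSup : ∀ m : ℕ, 2 ≤ m → logRatio f m ≤ L := by
    intro m hm
    rw [hLdef]
    exact le_iSup₂ (f := fun n (_ : n ∈ Set.Ici (2:ℕ)) => logRatio f n) m hm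
  -- L is bounded above by C
  obtain ⟨C, hC⟩ := wsm_L3 hgpos hgluc
  have hcnC : ∀ m : ℕ, 2 ≤ m → f m ≠ 0 → Real.log (f m) / Real.log m ≤ C := by
    intro m hm hfm
    have hfm0 : 0 < f m := lt_of_le_of_ne (hf0 m) (Ne.symm hfm)
    apply le_of_forall_pos_le_add
    intro ε hε
    obtain ⟨Z, hZ2, hZ⟩ := wsm_L2 hf0 hwsm hgpos hgluc hno m hm hfm0 ε hε
    have h1 := hZ (max Z 2) (le_max_left _ _)
    have h2 := hC (max Z 2) (le_max_right _ _)
    have hlz0 : 0 < Real.log (max Z 2) :=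
      Real.log_pos (lt_of_lt_of_le one_lt_two (le_max_right _ _))
    have h3 : (Real.log (f m) / Real.log m - ε) * Real.log (max Z 2)
        ≤ C * Real.log (max Z 2) := le_trans h1 h2
    have h4 := le_of_mul_le_mul_right h3 hlz0
    linarith
  have hLleC : L ≤ (C : EReal) := by
    rw [hLdef]
    apply iSup₂_le
    intro m hm
    by_cases hfm : f m = 0
    · rw [logRatio, if_pos hfm]; exact bot_le
    · rw [logRatio, if_neg hfm]
      exact_mod_cast EReal.coe_le_coe_iff.mpr (hcnC m hm hfm)
  have hLtop : L ≠ ⊤ := fun h => by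
    rw [h] at hLleC
    exact absurd (top_le_iff.mp hLleC) (EReal.coe_ne_top C)
  have hLbot : L ≠ ⊥ := by
    intro h
    have h1 := hle_iSup n₀ hn₀2
    rw [h, le_bot_iff, logRatio, if_neg hn₀f.ne'] at h1
    exact EReal.coe_ne_bot _ h1
  obtain ⟨Lr, hLr⟩ : ∃ Lr : ℝ, L = (Lr : EReal) := ⟨L.toReal, (EReal.coe_toReal hLtop hLbot).symm⟩
  -- everything is at most Lr
  have hub : ∀ m : ℕ, 2 ≤ m → f m ≠ 0 → Real.log (f m) / Real.log m ≤ Lr := by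
    intro m hm hfm
    have h := hle_iSup m hm
    rw [logRatio, if_neg hfm, hLr] at h
    exact EReal.coe_le_coe_iff.mp h
  -- lower bound for log g
  have hGL : ∀ ε : ℝ, 0 < ε → ∃ Z : ℝ, 2 ≤ Z ∧ ∀ z : ℝ, Z ≤ z →
      (Lr - ε) * Real.log z ≤ Real.log (g z) := by
    intro ε hε
    obtain ⟨m, hm2, hmgt⟩ : ∃ m : ℕ, 2 ≤ m ∧ ((Lr - ε/2 : ℝ) : EReal) < logRatio f m := by
      by_contra hcon
      push_neg at hcon
      have h1 : L ≤ ((Lr - ε/2 : ℝ) : EReal) := by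
        rw [hLdef]
        exact iSup₂_le (fun m hm => hcon m hm)
      rw [hLr] at h1
      have := EReal.coe_le_coe_iff.mp h1
      linarith
    have hfm : f m ≠ 0 := by
      intro h0
      rw [logRatio, if_pos h0] at hmgt
      exact not_lt_bot hmgt
    have hfm0 : 0 < f m := lt_of_le_of_ne (hf0 m) (Ne.symm hfm)
    have hcm : Lr - ε/2 < Real.log (f m) / Real.log m := by
      rw [logRatio, if_neg hfm] at hmgt
      exact EReal.coe_lt_coe_iff.mp hmgt
    obtain ⟨Z, hZ2, hZ⟩ := wsm_L2 hf0 hwsm hgpos hgluc hno m hm2 hfm0 (ε/2) (by linarith)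
    refine ⟨Z, hZ2, fun z hz => ?_⟩
    have h1 := hZ z hz
    have hlz0 : 0 ≤ Real.log z := Real.log_nonneg (by linarith)
    calc (Lr - ε) * Real.log z
        ≤ (Real.log (f m) / Real.log m - ε/2) * Real.log z :=
          mul_le_mul_of_nonneg_right (by linarith) hlz0
      _ ≤ Real.log (g z) := h1
  -- upper bound for log g
  have hL4 : ∀ ε : ℝ, 0 < ε → ∃ Z : ℝ, 2 ≤ Z ∧ ∀ z : ℝ, Z ≤ z →
      Real.log (g z) ≤ (Lr + ε) * Real.log z := by
    intro ε hε
    obtain ⟨δ₅, hδ₅0, hss⟩ := wsm_ss hgpos hgluc (1/2) (by norm_num)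
    obtain ⟨ε₄, hε₄def⟩ : ∃ e : ℝ, e = min (1/2) (δ₅/2) := ⟨_, rfl⟩
    have hε₄0 : 0 < ε₄ := by rw [hε₄def]; exact lt_min (by norm_num) (by linarith)
    have hε₄h : ε₄ ≤ 1/2 := by rw [hε₄def]; exact min_le_left _ _
    have hε₄δ : ε₄ < δ₅ := by
      rw [hε₄def]; exact lt_of_le_of_lt (min_le_right _ _) (by linarith)
    obtain ⟨X, hX1, hBc⟩ := wsm_density_count' _ hB2 (ε₄/8) (by positivity)
    refine ⟨max (max X (8/ε₄ + 2)) (Real.exp ((|Lr| + 2)/ε)), ?_, ?_⟩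
    · have : (0:ℝ) < 8/ε₄ := by positivity
      calc (2:ℝ) ≤ 8/ε₄ + 2 := by linarith
        _ ≤ max X (8/ε₄ + 2) := le_max_right _ _
        _ ≤ _ := le_max_left _ _
    intro z hz
    by_contra hcon
    push_neg at hcon
    have hzX : X ≤ z := le_trans (le_max_left _ _) (le_trans (le_max_left _ _) hz)
    have hz8 : 8/ε₄ + 2 ≤ z := le_trans (le_max_right _ _) (le_trans (le_max_left _ _) hz)
    have hzE : Real.exp ((|Lr| + 2)/ε) ≤ z := le_trans (le_max_right _ _) hz
    have hz2 : (2:ℝ) ≤ z := by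
      have : (0:ℝ) < 8/ε₄ := by positivity
      linarith
    have hz0 : (0:ℝ) < z := by linarith
    -- pick a good integer m in the window
    have hε₄z : 8 ≤ ε₄ * z := by
      have h1 : ε₄ * (8/ε₄) = 8 := by field_simp
      have h2 := mul_le_mul_of_nonneg_left hz8 hε₄0.le
      rw [mul_add] at h2
      nlinarith [h1, h2, hε₄0]
    have hwc := wsm_interval_card ε₄ z hε₄0 (by linarith)
    have hbadc := hBc ((1+ε₄)*z) (by nlinarith [mul_pos hε₄0 hz0])
    have hbadc2 : ((({m : ℕ | m ∈ {k : ℕ | 1/2 * g k ≤ |f k - g k|} ∧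
        (m:ℝ) ≤ (1+ε₄)*z} : Set ℕ)).ncard : ℝ) ≤ (3/16) * (ε₄ * z) := by
      have h5 : (ε₄/8)*((1+ε₄)*z) ≤ (3/16)*(ε₄*z) := by
        nlinarith [mul_nonneg (mul_nonneg hε₄0.le hz0.le)
          (by linarith : (0:ℝ) ≤ 1 - 2*ε₄)]
      linarith [hbadc]
    obtain ⟨W, hWdef⟩ : ∃ W : Set ℕ, W = {m : ℕ | z ≤ (m:ℝ) ∧ (m:ℝ) ≤ (1+ε₄) * z} := ⟨_, rfl⟩
    obtain ⟨Bad, hBaddef⟩ : ∃ B : Set ℕ, B = {m : ℕ | m ∈ {k : ℕ | 1/2 * g k ≤ |f k - g k|} ∧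
        (m:ℝ) ≤ (1+ε₄)*z} := ⟨_, rfl⟩
    have hBadfin : Bad.Finite := by
      rw [hBaddef]
      apply Set.Finite.subset (Set.finite_Iic ⌊(1+ε₄)*z⌋₊)
      intro m hm
      exact Nat.le_floor hm.2
    have hgood : (W \ Bad).Nonempty := by
      have hle := Set.ncard_le_ncard_diff_add_ncard W Bad hBadfin
      have hler : (W.ncard : ℝ) ≤ ((W \ Bad).ncard : ℝ) + (Bad.ncard : ℝ) := by
        exact_mod_cast hle
      have hWc : ε₄ * z - 2 ≤ (W.ncard : ℝ) := by rw [hWdef]; exact hwc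
      have hBc2 : (Bad.ncard : ℝ) ≤ (3/16) * (ε₄ * z) := by rw [hBaddef]; exact hbadc2
      have hpos : 0 < ((W \ Bad).ncard : ℝ) := by linarith
      have : (W \ Bad).ncard ≠ 0 := by
        intro h0; rw [h0] at hpos; simp at hpos
      exact Set.nonempty_of_ncard_ne_zero this
    obtain ⟨m, hmW, hmBad⟩ := hgood
    rw [hWdef] at hmW
    obtain ⟨hm1, hm2⟩ := hmW
    have hmB : ¬ (1/2 * g m ≤ |f m - g m|) := by
      intro h
      exact hmBad (by rw [hBaddef]; exact ⟨h, hm2⟩)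
    push_neg at hmB
    have hm0 : (0:ℝ) < (m:ℝ) := by linarith
    have hgz0 := hgpos z hz0
    have hgm0 := hgpos _ hm0
    have hm2' : (2:ℕ) ≤ m := by exact_mod_cast le_trans hz2 hm1
    -- estimates
    have hgm_low : (1/2) * g z ≤ g m := by
      have hh := (hss z (m:ℝ) hz0 hm0 (by
        have h6 : (m:ℝ)/z ≤ 1 + ε₄ := by rw [div_le_iff₀ hz0]; linarith
        rw [abs_of_nonneg (by rw [sub_nonneg]; exact (one_le_div hz0).mpr hm1)]
        linarith)).1
      linarith [hh]
    have hfm_low : (1/2) * g m ≤ f m := by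
      have := (abs_lt.mp hmB).1
      linarith
    have hfm0 : 0 < f m := by linarith
    have h14 : g z / 4 ≤ f m := by linarith
    have hlogfm : Real.log (g z) - Real.log 4 ≤ Real.log (f m) := by
      have := (Real.log_le_log_iff (by positivity) hfm0).mpr h14
      rwa [Real.log_div hgz0.ne' (by norm_num : (4:ℝ) ≠ 0)] at this
    have hlog4 : Real.log 4 ≤ 2 := by
      have h4 : (4:ℝ) = 2^2 := by norm_num
      rw [h4, Real.log_pow]
      have := Real.add_one_le_exp (1:ℝ)
      have hl2 : Real.log 2 ≤ 1 := by
        rw [show (1:ℝ) = Real.log (Real.exp 1) by rw [Real.log_exp]]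
        apply (Real.log_le_log_iff two_pos (Real.exp_pos 1)).mpr
        linarith
      push_cast
      linarith
    have hlz0 : 0 < Real.log z := Real.log_pos (by linarith)
    have hlm_low : Real.log z ≤ Real.log m := (Real.log_le_log_iff hz0 hm0).mpr hm1
    have hlm0 : 0 < Real.log m := lt_of_lt_of_le hlz0 hlm_low
    have hlm_up : Real.log m ≤ Real.log z + 1 := by
      have h7 : (m:ℝ) ≤ (3/2) * z := by nlinarith [mul_pos hε₄0 hz0]
      have h8 := (Real.log_le_log_iff hm0 (by linarith)).mpr h7
      rw [Real.log_mul (by norm_num : (3/2:ℝ) ≠ 0) hz0.ne'] at h8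
      have h9 : Real.log (3/2) ≤ 1/2 := by
        have := Real.log_le_sub_one_of_pos (by norm_num : (0:ℝ) < 3/2)
        linarith
      linarith
    have hεlz : |Lr| + 2 ≤ ε * Real.log z := by
      have h10 : (|Lr| + 2)/ε ≤ Real.log z := by
        rw [show (|Lr| + 2)/ε = Real.log (Real.exp ((|Lr| + 2)/ε)) by rw [Real.log_exp]]
        exact (Real.log_le_log_iff (Real.exp_pos _) hz0).mpr hzE
      rw [div_le_iff₀ hε] at h10
      linarith
    have hub_m := hub m hm2' hfm0.ne'
    have hub_m' : Real.log (f m) ≤ Lr * Real.log m := by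
      rw [div_le_iff₀ hlm0] at hub_m
      linarith
    have hLrm : Lr * Real.log m ≤ Lr * Real.log z + |Lr| := by
      rcases le_or_gt 0 Lr with hL0 | hL0
      · have := mul_le_mul_of_nonneg_left hlm_up hL0
        have := le_abs_self Lr
        nlinarith
      · have := mul_le_mul_of_nonpos_left hlm_low hL0.le
        have := abs_nonneg Lr
        linarith
    nlinarith [hcon, hlogfm, hlog4, hεlz, hub_m', hLrm]
  -- assemble the essential limit
  right
  refine ⟨Lr, hLr, ?_⟩
  intro ε hε
  obtain ⟨Z₁, hZ₁2, hGL'⟩ := hGL (ε/2) (by linarith)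
  obtain ⟨Z₂, hZ₂2, hL4'⟩ := hL4 (ε/2) (by linarith)
  obtain ⟨N₁, hN₁def⟩ : ∃ N₁ : ℕ, N₁ = ⌈max (max Z₁ Z₂) (Real.exp (2/ε))⌉₊ := ⟨_, rfl⟩
  obtain ⟨T, hTdef⟩ : ∃ T : Set ℕ, T = {n : ℕ | logRatio f n < ((Lr - ε : ℝ) : EReal) ∨
      ((Lr + ε : ℝ) : EReal) < logRatio f n} := ⟨_, rfl⟩
  rw [← hTdef]
  have hl2' : Real.log 2 ≤ 1 := by
    have he := Real.add_one_le_exp (1:ℝ)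
    rw [show (1:ℝ) = Real.log (Real.exp 1) by rw [Real.log_exp]]
    apply (Real.log_le_log_iff two_pos (Real.exp_pos 1)).mpr
    linarith
  have hkey : ∀ n : ℕ, n ∈ T → n ∈ {k : ℕ | 1/2 * g k ≤ |f k - g k|} ∨ n ≤ N₁ := by
    intro n hnT
    by_contra hcontra
    push_neg at hcontra
    obtain ⟨hnB, hnN⟩ := hcontra
    have hnN' : N₁ + 1 ≤ n := by omega
    have hnR : max (max Z₁ Z₂) (Real.exp (2/ε)) ≤ (n:ℝ) := by
      calc max (max Z₁ Z₂) (Real.exp (2/ε)) ≤ (N₁:ℝ) := by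
            rw [hN₁def]; exact Nat.le_ceil _
        _ ≤ (n:ℝ) := by exact_mod_cast Nat.le_of_succ_le hnN'
    have hZ₁n : Z₁ ≤ (n:ℝ) := le_trans (le_trans (le_max_left _ _) (le_max_left _ _)) hnR
    have hZ₂n : Z₂ ≤ (n:ℝ) := le_trans (le_trans (le_max_right _ _) (le_max_left _ _)) hnR
    have hEn : Real.exp (2/ε) ≤ (n:ℝ) := le_trans (le_max_right _ _) hnR
    have hn2 : (2:ℝ) ≤ (n:ℝ) := le_trans hZ₁2 hZ₁n
    have hn0 : (0:ℝ) < (n:ℝ) := by linarith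
    have hgn0 := hgpos _ hn0
    simp only [Set.mem_setOf_eq, not_le] at hnB
    have hfn0 : 0 < f n := by
      have := (abs_lt.mp hnB).1
      linarith
    have hlogn0 : 0 < Real.log n := Real.log_pos (by linarith)
    have hlogn2 : 2/ε ≤ Real.log n := by
      rw [show (2:ℝ)/ε = Real.log (Real.exp (2/ε)) by rw [Real.log_exp]]
      exact (Real.log_le_log_iff (Real.exp_pos _) hn0).mpr hEn
    have h1ε : 1 ≤ (ε/2) * Real.log n := by
      have h1 := mul_le_mul_of_nonneg_left hlogn2 (le_of_lt (half_pos hε))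
      have h2 : (ε/2)*(2/ε) = 1 := by field_simp
      rw [h2] at h1
      exact h1
    have hfg_up : f n / g ↑n ≤ 3/2 := by
      rw [div_le_iff₀ hgn0]
      have := (abs_lt.mp hnB).2
      linarith
    have hfg_low : (1:ℝ)/2 ≤ f n / g ↑n := by
      rw [le_div_iff₀ hgn0]
      have := (abs_lt.mp hnB).1
      linarith
    have hlogdiff : |Real.log (f n) - Real.log (g ↑n)| ≤ 1 := by
      rw [← Real.log_div hfn0.ne' hgn0.ne', abs_le]
      constructor
      · have h3 := (Real.log_le_log_iff (by norm_num : (0:ℝ) < 1/2)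
          (by positivity)).mpr hfg_low
        have h4 : Real.log (1/2) = -Real.log 2 := by
          rw [show (1/2:ℝ) = 2⁻¹ by norm_num, Real.log_inv]
        linarith
      · have h3 := (Real.log_le_log_iff (by positivity)
          (by norm_num : (0:ℝ) < 3/2)).mpr hfg_up
        have h4 : Real.log (3/2) ≤ 1/2 := by
          have := Real.log_le_sub_one_of_pos (by norm_num : (0:ℝ) < 3/2)
          linarith
        linarith
    have hglow := hGL' (n:ℝ) hZ₁n
    have hgup := hL4' (n:ℝ) hZ₂n
    obtain ⟨hld1, hld2⟩ := abs_le.mp hlogdiff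
    have hclow : Lr - ε ≤ Real.log (f n) / Real.log n := by
      rw [le_div_iff₀ hlogn0]
      have hexp : (Lr - ε) * Real.log n = (Lr - ε/2) * Real.log n - (ε/2) * Real.log n := by
        ring
      linarith
    have hcup : Real.log (f n) / Real.log n ≤ Lr + ε := by
      rw [div_le_iff₀ hlogn0]
      have hexp : (Lr + ε) * Real.log n = (Lr + ε/2) * Real.log n + (ε/2) * Real.log n := by
        ring
      linarith
    rw [hTdef] at hnT
    simp only [Set.mem_setOf_eq] at hnT
    rw [logRatio, if_neg hfn0.ne'] at hnT
    rcases hnT with h | h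
    · exact absurd (EReal.coe_lt_coe_iff.mp h) (not_lt.mpr hclow)
    · exact absurd (EReal.coe_lt_coe_iff.mp h) (not_lt.mpr hcup)
  -- final density computation
  unfold HasNatDensity
  have htB := wsm_density_tendsto _ hB2
  have hbound : ∀ N : ℕ, (({n | n ∈ T ∧ n ≤ N} : Set ℕ).ncard : ℝ)/N ≤
      (({n | n ∈ {k : ℕ | 1/2 * g k ≤ |f k - g k|} ∧ n ≤ N} : Set ℕ).ncard : ℝ)/N
        + ((N₁:ℝ)+1)/N := by
    intro N
    rcases Nat.eq_zero_or_pos N with h0 | hN0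
    · subst h0; simp
    have hN0' : (0:ℝ) < N := by exact_mod_cast hN0
    have hsubN : {n | n ∈ T ∧ n ≤ N} ⊆
        {n | n ∈ {k : ℕ | 1/2 * g k ≤ |f k - g k|} ∧ n ≤ N} ∪ Set.Iic N₁ := by
      rintro n ⟨hnT, hnN⟩
      rcases hkey n hnT with h | h
      · exact Or.inl ⟨h, hnN⟩
      · exact Or.inr h
    have hfin1 : ({n | n ∈ {k : ℕ | 1/2 * g k ≤ |f k - g k|} ∧ n ≤ N} : Set ℕ).Finite :=
      Set.Finite.subset (Set.finite_Iic N) (fun n hn => hn.2)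
    have hfinU : (({n | n ∈ {k : ℕ | 1/2 * g k ≤ |f k - g k|} ∧ n ≤ N} : Set ℕ)
        ∪ Set.Iic N₁).Finite := hfin1.union (Set.finite_Iic N₁)
    have h2 := Set.ncard_le_ncard hsubN hfinU
    have h3 := Set.ncard_union_le
      ({n | n ∈ {k : ℕ | 1/2 * g k ≤ |f k - g k|} ∧ n ≤ N} : Set ℕ) (Set.Iic N₁)
    have h4 : (Set.Iic N₁).ncard = N₁ + 1 := by
      rw [← Finset.coe_Iic, Set.ncard_coe_finset, Nat.card_Iic]
    have h5 : (({n | n ∈ T ∧ n ≤ N} : Set ℕ).ncard : ℝ) ≤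
        (({n | n ∈ {k : ℕ | 1/2 * g k ≤ |f k - g k|} ∧ n ≤ N} : Set ℕ).ncard : ℝ)
          + ((N₁:ℝ)+1) := by
      have h6 := le_trans h2 h3
      rw [h4] at h6
      push_cast
      exact_mod_cast h6
    rw [← add_div]
    exact div_le_div_of_nonneg_right h5 hN0'.le
  have hlim : Filter.Tendsto (fun N : ℕ =>
      (({n | n ∈ {k : ℕ | 1/2 * g k ≤ |f k - g k|} ∧ n ≤ N} : Set ℕ).ncard : ℝ)/N
        + ((N₁:ℝ)+1)/N) atTop (𝓝 0) := by
    have h2 := tendsto_const_div_atTop_nhds_zero_nat ((N₁:ℝ)+1)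
    simpa using htB.add h2
  exact squeeze_zero (fun N => by positivity) hbound hlim
end

section
/- Let f : ℕ → (0,∞) be a function such that both f and n ↦ 1/f(n) are weakly super-multiplicative, and suppose f has a normal order g, where g : (0,∞) → (0,∞) is strictly positive and monotone (non-decreasing or non-increasing). Then there exists a real constant c such that f(n) = n^c holds for all n ∈ ℕ. -/
open Filter Topology

open Filter in
lemma density_count (S : Set ℕ) (h : upperDensity S = 0) (c : ℝ) (hc : 0 < c) :
    ∃ N₀ : ℕ, 1 ≤ N₀ ∧ ∀ N ≥ N₀, (({n | n ∈ S ∧ n ≤ N} : Set ℕ).ncard : ℝ) ≤ c * N := by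
  have hcard : ∀ N : ℕ, (({n | n ∈ S ∧ n ≤ N} : Set ℕ).ncard : ℝ) ≤ N + 1 := by
    intro N
    have h1 : ({n | n ∈ S ∧ n ≤ N} : Set ℕ) ⊆ Set.Iic N := fun n hn => hn.2
    have h2 : ({n | n ∈ S ∧ n ≤ N} : Set ℕ).ncard ≤ (Set.Iic N).ncard :=
      Set.ncard_le_ncard h1 (Set.finite_Iic N)
    have h3 : (Set.Iic N).ncard = N + 1 := by
      rw [← Finset.coe_Iic, Set.ncard_coe_finset, Nat.card_Iic]
    calc (({n | n ∈ S ∧ n ≤ N} : Set ℕ).ncard : ℝ) ≤ ((N + 1 : ℕ) : ℝ) := by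
          exact_mod_cast h3 ▸ h2
      _ = N + 1 := by push_cast; ring
  have hbdd : IsBoundedUnder (· ≤ ·) atTop
      (fun N : ℕ => (({n | n ∈ S ∧ n ≤ N} : Set ℕ).ncard : ℝ) / N) := by
    refine isBoundedUnder_of ⟨2, fun N => ?_⟩
    rcases Nat.eq_zero_or_pos N with rfl | hN
    · simp
    · have hN' : (0:ℝ) < N := by exact_mod_cast hN
      rw [div_le_iff₀ hN']
      calc (({n | n ∈ S ∧ n ≤ N} : Set ℕ).ncard : ℝ) ≤ N + 1 := hcard N
        _ ≤ 2 * N := by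
            have : (1:ℝ) ≤ N := by exact_mod_cast hN
            linarith
  have hev : ∀ᶠ N : ℕ in atTop,
      (({n | n ∈ S ∧ n ≤ N} : Set ℕ).ncard : ℝ) / N < c := by
    apply Filter.eventually_lt_of_limsup_lt _ hbdd
    rw [show Filter.limsup (fun N : ℕ => (({n | n ∈ S ∧ n ≤ N} : Set ℕ).ncard : ℝ) / N) atTop
        = upperDensity S from rfl, h]
    exact hc
  obtain ⟨N₀, hN₀⟩ := hev.exists_forall_of_atTop
  refine ⟨max N₀ 1, le_max_right _ _, fun N hN => ?_⟩
  have h1 : N₀ ≤ N := le_trans (le_max_left _ _) hN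
  have h2 : 1 ≤ N := le_trans (le_max_right _ _) hN
  have hN' : (0:ℝ) < N := by exact_mod_cast h2
  have := hN₀ N h1
  rw [div_lt_iff₀ hN'] at this
  linarith

/-- Key extraction: from a weak-supermultiplicativity-type counting bound and two
density-zero exceptional sets, extract a good `m` in every interval far enough out. -/
lemma extraction_aux (E : Set ℕ) (hE : upperDensity E = 0)
    (n : ℕ) (hn : 0 < n) (ε : ℝ) (hε : 0 < ε) (P : ℕ → Prop)
    (x₀ : ℝ) (hx₀ : 0 < x₀) (δ : ℝ) (hδ : 0 < δ)
    (hws : ∀ x : ℝ, x₀ < x → δ * x ≤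
      (({m : ℕ | ((x:ℝ) ≤ (m:ℝ) ∧ (m:ℝ) ≤ (1 + ε) * x) ∧ P m} : Set ℕ).ncard : ℝ)) :
    ∃ x₁ : ℝ, 0 < x₁ ∧ ∀ x : ℝ, x₁ < x → ∃ m : ℕ,
      (x ≤ (m:ℝ) ∧ (m:ℝ) ≤ (1 + ε) * x) ∧ P m ∧ m ∉ E ∧ n * m ∉ E := by
  have hε1 : (0:ℝ) < 1 + ε := by linarith
  -- densities
  obtain ⟨N₁, hN₁one, hN₁⟩ := density_count E hE (δ / (4 * (1 + ε))) (by positivity)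
  obtain ⟨N₂, hN₂one, hN₂⟩ := density_count E hE (δ / (4 * n * (1 + ε))) (by positivity)
  refine ⟨max (max x₀ 1) (max (N₁ : ℝ) (N₂ : ℝ)) + 1, by positivity, fun x hx => ?_⟩
  have hxx₀ : x₀ < x := by
    have := le_max_left x₀ (1:ℝ)
    have := le_max_left (max x₀ 1) (max (N₁:ℝ) (N₂:ℝ))
    linarith [le_max_left x₀ (1:ℝ), le_max_left (max x₀ 1) (max (N₁:ℝ) (N₂:ℝ))]
  have hx1 : (1:ℝ) < x := by
    linarith [le_max_right x₀ (1:ℝ), le_max_left (max x₀ 1) (max (N₁:ℝ) (N₂:ℝ))]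
  have hxpos : (0:ℝ) < x := by linarith
  have hxN₁ : (N₁ : ℝ) < x := by
    linarith [le_max_left (N₁:ℝ) (N₂:ℝ), le_max_right (max x₀ 1) (max (N₁:ℝ) (N₂:ℝ))]
  have hxN₂ : (N₂ : ℝ) < x := by
    linarith [le_max_right (N₁:ℝ) (N₂:ℝ), le_max_right (max x₀ 1) (max (N₁:ℝ) (N₂:ℝ))]
  -- the interval cap
  set N : ℕ := ⌊(1 + ε) * x⌋₊ with hN
  have hxleN : x ≤ (N : ℝ) + 1 := by
    have : x ≤ (1 + ε) * x := by nlinarith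
    have h2 := Nat.lt_floor_add_one ((1 + ε) * x)
    linarith
  have hNcapge : (N₁ : ℝ) ≤ N := by
    have : (N₁ : ℝ) < (N:ℝ) + 1 := lt_of_lt_of_le hxN₁ hxleN
    have := Nat.cast_lt (α := ℝ) |>.mp (by exact_mod_cast this : (N₁:ℝ) < ((N+1 : ℕ):ℝ))
    exact_mod_cast Nat.lt_succ_iff.mp this
  -- sets
  set G : Set ℕ := {m : ℕ | ((x:ℝ) ≤ (m:ℝ) ∧ (m:ℝ) ≤ (1 + ε) * x) ∧ P m} with hG
  have hGfin : G.Finite := by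
    apply (Set.finite_Iic N).subset
    intro m hm
    exact Nat.le_floor hm.1.2
  set B₁ : Set ℕ := {m : ℕ | ((x:ℝ) ≤ (m:ℝ) ∧ (m:ℝ) ≤ (1 + ε) * x) ∧ m ∈ E} with hB₁
  set B₂ : Set ℕ := {m : ℕ | ((x:ℝ) ≤ (m:ℝ) ∧ (m:ℝ) ≤ (1 + ε) * x) ∧ n * m ∈ E} with hB₂
  have hB₁fin : B₁.Finite := by
    apply (Set.finite_Iic N).subset
    intro m hm
    exact Nat.le_floor hm.1.2
  have hB₂fin : B₂.Finite := by
    apply (Set.finite_Iic N).subset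
    intro m hm
    exact Nat.le_floor hm.1.2
  -- counting bounds
  have hB₁card : (B₁.ncard : ℝ) ≤ δ / 4 * x := by
    have hsub : B₁ ⊆ {k | k ∈ E ∧ k ≤ N} := by
      intro m hm
      exact ⟨hm.2, Nat.le_floor hm.1.2⟩
    have h1 : (B₁.ncard : ℝ) ≤ (({k | k ∈ E ∧ k ≤ N} : Set ℕ).ncard : ℝ) := by
      exact_mod_cast Set.ncard_le_ncard hsub ((Set.finite_Iic N).subset (fun k hk => hk.2))
    have h2 := hN₁ N (by exact_mod_cast Nat.cast_le.mp (by exact_mod_cast hNcapge))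
    have h3 : (N : ℝ) ≤ (1 + ε) * x := Nat.floor_le (by positivity)
    calc (B₁.ncard : ℝ) ≤ δ / (4 * (1 + ε)) * N := le_trans h1 h2
      _ ≤ δ / (4 * (1 + ε)) * ((1 + ε) * x) := by
          apply mul_le_mul_of_nonneg_left h3 (by positivity)
      _ = δ / 4 * x := by field_simp
  have hB₂card : (B₂.ncard : ℝ) ≤ δ / 4 * x := by
    have himg : (fun m => n * m) '' B₂ ⊆ {k | k ∈ E ∧ k ≤ n * N} := by
      rintro k ⟨m, hm, rfl⟩
      exact ⟨hm.2, Nat.mul_le_mul_left n (Nat.le_floor hm.1.2)⟩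
    have hinj : Function.Injective (fun m => n * m) := fun a b h => by
      exact Nat.eq_of_mul_eq_mul_left hn h
    have hNN₂ : N₂ ≤ n * N := by
      have h2' : (N₂ : ℝ) < (N:ℝ) + 1 := lt_of_lt_of_le hxN₂ hxleN
      have h2n : N₂ < N + 1 := by exact_mod_cast h2'
      calc N₂ ≤ N := Nat.lt_succ_iff.mp h2n
        _ ≤ n * N := Nat.le_mul_of_pos_left N hn
    have h1 : (B₂.ncard : ℝ) ≤ (({k | k ∈ E ∧ k ≤ n * N} : Set ℕ).ncard : ℝ) := by
      rw [← Set.ncard_image_of_injective B₂ hinj]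
      exact_mod_cast Set.ncard_le_ncard himg ((Set.finite_Iic (n*N)).subset (fun k hk => hk.2))
    have h2 := hN₂ (n * N) hNN₂
    have h3 : (N : ℝ) ≤ (1 + ε) * x := Nat.floor_le (by positivity)
    have hnpos : (0:ℝ) < n := by exact_mod_cast hn
    calc (B₂.ncard : ℝ) ≤ δ / (4 * n * (1 + ε)) * (n * N) := by
          calc (B₂.ncard : ℝ) ≤ (({k | k ∈ E ∧ k ≤ n * N} : Set ℕ).ncard : ℝ) := h1
            _ ≤ δ / (4 * n * (1 + ε)) * ((n * N : ℕ):ℝ) := h2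
            _ = δ / (4 * n * (1 + ε)) * (n * N) := by push_cast; ring
      _ ≤ δ / (4 * n * (1 + ε)) * (n * ((1 + ε) * x)) := by
          apply mul_le_mul_of_nonneg_left _ (by positivity)
          exact mul_le_mul_of_nonneg_left h3 (by positivity)
      _ = δ / 4 * x := by field_simp
  -- now the main count
  have hGcard : δ * x ≤ (G.ncard : ℝ) := hws x hxx₀
  -- suppose all good m are bad
  by_contra hcon
  push_neg at hcon
  have hsub : G ⊆ B₁ ∪ B₂ := by
    intro m hm
    by_contra hm'
    simp only [Set.mem_union, not_or] at hm'
    have hmE : m ∉ E := fun h => hm'.1 ⟨hm.1, h⟩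
    have : n * m ∈ E := hcon m ⟨hm.1.1, hm.1.2⟩ hm.2 hmE
    exact hm'.2 ⟨hm.1, this⟩
  have h1 : (G.ncard : ℝ) ≤ (B₁ ∪ B₂).ncard :=
    by exact_mod_cast Set.ncard_le_ncard hsub (hB₁fin.union hB₂fin)
  have h2 : ((B₁ ∪ B₂).ncard : ℝ) ≤ (B₁.ncard : ℝ) + B₂.ncard := by
    exact_mod_cast Set.ncard_union_le B₁ B₂
  have : δ * x ≤ δ / 4 * x + δ / 4 * x := by linarith
  nlinarith

section Star
variable (f : ℕ → ℝ) (g : ℝ → ℝ)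
    (hfpos : ∀ n, 0 < f n)
    (hgpos : ∀ x : ℝ, 0 < x → 0 < g x)
    (hmono : ∀ x y : ℝ, 0 < x → x ≤ y → g x ≤ g y)
    (hno : HasNormalOrder f g)

include hfpos hgpos hmono hno

/-- (∗): `f n * g x ≤ A ε * g (n (1+ε) x)` for all large `x`. -/
lemma wsm_star (hwsm : WeaklySuperMult f) (n : ℕ) (hn : 0 < n) (ε : ℝ) (hε : 0 < ε) (hε1 : ε < 1) :
    ∃ X : ℝ, 0 < X ∧ ∀ x : ℝ, X ≤ x →
      f n * g x ≤ ((1 + ε)/(1 - ε)^2) * g ((n:ℝ) * ((1 + ε) * x)) := by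
  obtain ⟨x₀, hx₀, δ, hδ, hws⟩ := hwsm n hn ε hε
  obtain ⟨x₁, hx₁, hext⟩ := extraction_aux _ (hno ε hε) n hn ε hε _ x₀ hx₀ δ hδ hws
  refine ⟨x₁ + 1, by linarith, fun x hx => ?_⟩
  obtain ⟨m, ⟨hxm, hmx⟩, hP, hmE, hnmE⟩ := hext x (by linarith)
  have hxpos : (0:ℝ) < x := by linarith
  have hmpos : (0:ℝ) < (m:ℝ) := lt_of_lt_of_le hxpos hxm
  have hm0 : 0 < m := by exact_mod_cast hmpos
  have hnm0 : 0 < n * m := Nat.mul_pos hn hm0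
  have hnmpos : (0:ℝ) < ((n*m : ℕ):ℝ) := by exact_mod_cast hnm0
  have hgm : 0 < g m := hgpos _ hmpos
  have hgnm : 0 < g ((n*m:ℕ):ℝ) := hgpos _ hnmpos
  -- m not exceptional : f m > (1-ε) g m
  have hfm : (1 - ε) * g (m:ℝ) ≤ f m := by
    simp only [Set.mem_setOf_eq, not_le] at hmE
    have := abs_lt.mp hmE
    nlinarith [this.1]
  -- n*m not exceptional: f (n*m) ≤ (1+ε) g (n*m)
  have hfnm : f (n*m) ≤ (1 + ε) * g ((n*m:ℕ):ℝ) := by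
    simp only [Set.mem_setOf_eq, not_le] at hnmE
    have := abs_lt.mp hnmE
    nlinarith [this.2]
  have hgx : g x ≤ g (m:ℝ) := hmono x m hxpos hxm
  have hgup : g ((n*m:ℕ):ℝ) ≤ g ((n:ℝ) * ((1+ε) * x)) := by
    apply hmono _ _ hnmpos
    push_cast
    have hnpos : (0:ℝ) < (n:ℝ) := by exact_mod_cast hn
    nlinarith
  have key : (1 - ε)^2 * (f n * g x) ≤ (1 + ε) * g ((n:ℝ) * ((1+ε) * x)) := by
    have hfn := hfpos n
    have h0 : (0:ℝ) ≤ 1 - ε := by linarith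
    have h1 : (1-ε)^2 * (f n * g x) ≤ (1-ε) * f n * f m := by
      have e2 : (1-ε) * g x ≤ f m := le_trans (by nlinarith) hfm
      calc (1-ε)^2 * (f n * g x) = ((1-ε) * f n) * ((1-ε) * g x) := by ring
        _ ≤ ((1-ε) * f n) * f m := by
            exact mul_le_mul_of_nonneg_left e2 (mul_nonneg h0 hfn.le)
        _ = (1-ε) * f n * f m := by ring
    calc (1-ε)^2 * (f n * g x) ≤ f (n*m) := le_trans h1 hP
      _ ≤ (1+ε) * g ((n*m:ℕ):ℝ) := hfnm
      _ ≤ (1+ε) * g ((n:ℝ) * ((1+ε) * x)) := by nlinarith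
  have h2 : (0:ℝ) < (1-ε)^2 := pow_pos (by linarith) 2
  rw [div_mul_eq_mul_div, le_div_iff₀ h2]
  linear_combination key
set_option maxHeartbeats 1000000 in
/-- (∗∗): `g (n x) ≤ A ε * f n * g ((1+ε) x)` for all large `x`. -/
lemma wsm_starstar (hwsm' : WeaklySuperMult (fun k => 1 / f k))
    (n : ℕ) (hn : 0 < n) (ε : ℝ) (hε : 0 < ε) (hε1 : ε < 1) :
    ∃ X : ℝ, 0 < X ∧ ∀ x : ℝ, X ≤ x →
      g ((n:ℝ) * x) ≤ ((1 + ε)/(1 - ε)^2) * (f n * g ((1 + ε) * x)) := by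
  obtain ⟨x₀, hx₀, δ, hδ, hws⟩ := hwsm' n hn ε hε
  obtain ⟨x₁, hx₁, hext⟩ := extraction_aux _ (hno ε hε) n hn ε hε _ x₀ hx₀ δ hδ hws
  refine ⟨x₁ + 1, by linarith, fun x hx => ?_⟩
  obtain ⟨m, ⟨hxm, hmx⟩, hP, hmE, hnmE⟩ := hext x (by linarith)
  have hxpos : (0:ℝ) < x := by linarith
  have hmpos : (0:ℝ) < (m:ℝ) := lt_of_lt_of_le hxpos hxm
  have hm0 : 0 < m := by exact_mod_cast hmpos
  have hnm0 : 0 < n * m := Nat.mul_pos hn hm0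
  have hnmpos : (0:ℝ) < ((n*m : ℕ):ℝ) := by exact_mod_cast hnm0
  have hgm : 0 < g m := hgpos _ hmpos
  have hgnm : 0 < g ((n*m:ℕ):ℝ) := hgpos _ hnmpos
  have hnpos : (0:ℝ) < (n:ℝ) := by exact_mod_cast hn
  have h0 : (0:ℝ) ≤ 1 - ε := by linarith
  -- P m: (1-ε) f(nm) ≤ f n f m
  have hP' : (1 - ε) * f (n*m) ≤ f n * f m := by
    have h1 := hfpos n; have h2 := hfpos m; have h3 := hfpos (n*m)
    have hP2 : (1 - ε) / (f n * f m) ≤ 1 / f (n*m) := by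
      calc (1 - ε) / (f n * f m) = (1-ε) * (1/f n) * (1/f m) := by
            field_simp
          _ ≤ 1 / f (n*m) := hP
    rw [div_le_div_iff₀ (mul_pos h1 h2) h3] at hP2
    linarith
  -- m not exceptional: f m ≤ (1+ε) g m
  have hfm : f m ≤ (1 + ε) * g (m:ℝ) := by
    simp only [Set.mem_setOf_eq, not_le] at hmE
    have := abs_lt.mp hmE
    nlinarith [this.2]
  -- n*m not exceptional: (1-ε) g(nm) ≤ f (n*m)
  have hfnm : (1 - ε) * g ((n*m:ℕ):ℝ) ≤ f (n*m) := by
    simp only [Set.mem_setOf_eq, not_le] at hnmE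
    have := abs_lt.mp hnmE
    nlinarith [this.1]
  have hg1 : g ((n:ℝ) * x) ≤ g ((n*m:ℕ):ℝ) := by
    apply hmono _ _ (by positivity)
    push_cast
    nlinarith
  have hg2 : g (m:ℝ) ≤ g ((1+ε) * x) := hmono _ _ hmpos (by nlinarith)
  have key : (1-ε)^2 * g ((n:ℝ) * x) ≤ (1+ε) * (f n * g ((1+ε)*x)) := by
    have c1 : (1-ε)^2 * g ((n:ℝ) * x) ≤ (1-ε)^2 * g ((n*m:ℕ):ℝ) :=
      mul_le_mul_of_nonneg_left hg1 (by positivity)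
    have c2 : (1-ε)^2 * g ((n*m:ℕ):ℝ) ≤ (1-ε) * f (n*m) := by
      calc (1-ε)^2 * g ((n*m:ℕ):ℝ) = (1-ε) * ((1-ε) * g ((n*m:ℕ):ℝ)) := by ring
        _ ≤ (1-ε) * f (n*m) := mul_le_mul_of_nonneg_left hfnm h0
    have c4 : f n * f m ≤ (1+ε) * (f n * g ((1+ε)*x)) := by
      have e1 : f m ≤ (1+ε) * g ((1+ε)*x) := by
        calc f m ≤ (1+ε) * g (m:ℝ) := hfm
          _ ≤ (1+ε) * g ((1+ε)*x) := mul_le_mul_of_nonneg_left hg2 (by linarith)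
      calc f n * f m ≤ f n * ((1+ε) * g ((1+ε)*x)) :=
            mul_le_mul_of_nonneg_left e1 (hfpos n).le
        _ = (1+ε) * (f n * g ((1+ε)*x)) := by ring
    linarith [hP']
  have h2 : (0:ℝ) < (1-ε)^2 := pow_pos (by linarith) 2
  rw [div_mul_eq_mul_div, le_div_iff₀ h2]
  linear_combination key
end Star

/-- window bound: `g((1+ε)x) ≤ K g x` for all large `x`, with `K = A ε * f 2`. -/
lemma wsm_window (f : ℕ → ℝ) (g : ℝ → ℝ)
    (hgpos : ∀ x : ℝ, 0 < x → 0 < g x)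
    (hmono : ∀ x y : ℝ, 0 < x → x ≤ y → g x ≤ g y)
    (hss : ∀ n : ℕ, 0 < n → ∀ ε : ℝ, 0 < ε → ε < 1 → ∃ X : ℝ, 0 < X ∧ ∀ x : ℝ, X ≤ x →
      g ((n:ℝ) * x) ≤ ((1 + ε)/(1 - ε)^2) * (f n * g ((1 + ε) * x)))
    (ε : ℝ) (hε : 0 < ε) (hε3 : ε ≤ 1/3) :
    ∃ X : ℝ, 0 < X ∧ ∀ x : ℝ, X ≤ x →
      g ((1 + ε) * x) ≤ ((1 + ε)/(1 - ε)^2 * f 2) * g x := by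
  obtain ⟨X₂, hX₂, hss2⟩ := hss 2 (by norm_num) ε hε (by linarith)
  refine ⟨(1 + ε) * X₂, by positivity, fun x hx => ?_⟩
  have hε1 : (0:ℝ) < 1 + ε := by linarith
  set y := x / (1 + ε) with hy
  have hyX : X₂ ≤ y := by
    rw [hy, le_div_iff₀ hε1]
    linarith [hx]
  have hypos : 0 < y := lt_of_lt_of_le hX₂ hyX
  have hxpos : 0 < x := lt_of_lt_of_le (by positivity) hx
  have h2y : g ((1 + ε) * x) ≤ g (((2:ℕ):ℝ) * y) := by
    apply hmono _ _ (mul_pos hε1 hxpos)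
    have heq : (1 + ε) * x = (1+ε)^2 * y := by
      rw [hy]; field_simp
    rw [heq]
    have hsq : (1+ε)^2 ≤ 2 := by nlinarith
    push_cast
    nlinarith [mul_le_mul_of_nonneg_right hsq hypos.le]
  have hssy := hss2 y hyX
  have hxy : (1 + ε) * y = x := by rw [hy]; field_simp
  calc g ((1+ε) * x) ≤ g (((2:ℕ):ℝ) * y) := h2y
    _ ≤ (1 + ε)/(1-ε)^2 * (f 2 * g ((1+ε) * y)) := hssy
    _ = ((1 + ε)/(1-ε)^2 * f 2) * g x := by rw [hxy]; ring

/-- `f 1 = 1`. -/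
lemma f_one (f : ℕ → ℝ) (hfpos : ∀ n, 0 < f n)
    (hwsm : WeaklySuperMult f) (hwsm' : WeaklySuperMult (fun k => 1 / f k)) : f 1 = 1 := by
  have key : ∀ ε : ℝ, 0 < ε → (1 - ε) * f 1 ≤ 1 ∧ 1 - ε ≤ f 1 := by
    intro ε hε
    constructor
    · obtain ⟨x₀, hx₀, δ, hδ, hws⟩ := hwsm 1 one_pos ε hε
      have h1 := hws (x₀ + 1) (by linarith)
      have hne : ({m : ℕ | ((x₀+1:ℝ) ≤ (m:ℝ) ∧ (m:ℝ) ≤ (1 + ε) * (x₀+1)) ∧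
          (1 - ε) * f 1 * f m ≤ f (1 * m)} : Set ℕ).Nonempty := by
        apply Set.nonempty_of_ncard_ne_zero
        intro h0
        rw [h0] at h1
        push_cast at h1
        nlinarith
      obtain ⟨m, hm⟩ := hne
      have h2 : (1 - ε) * f 1 * f m ≤ f m := by
        have := hm.2; rwa [one_mul] at this
      have := hfpos m
      nlinarith
    · obtain ⟨x₀, hx₀, δ, hδ, hws⟩ := hwsm' 1 one_pos ε hε
      have h1 := hws (x₀ + 1) (by linarith)
      have hne : ({m : ℕ | ((x₀+1:ℝ) ≤ (m:ℝ) ∧ (m:ℝ) ≤ (1 + ε) * (x₀+1)) ∧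
          (1 - ε) * (1/f 1) * (1/f m) ≤ 1/f (1 * m)} : Set ℕ).Nonempty := by
        apply Set.nonempty_of_ncard_ne_zero
        intro h0
        rw [h0] at h1
        push_cast at h1
        nlinarith
      obtain ⟨m, hm⟩ := hne
      have h2 : (1 - ε) * (1/f 1) * (1/f m) ≤ 1/f m := by
        have := hm.2; rwa [one_mul] at this
      have hm1 := hfpos m; have hf1 := hfpos 1
      have h3 : (1-ε)/(f 1 * f m) ≤ 1/f m := by
        calc (1-ε)/(f 1 * f m) = (1-ε)*(1/f 1)*(1/f m) := by field_simp
          _ ≤ 1/f m := h2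
      rw [div_le_div_iff₀ (mul_pos hf1 hm1) hm1] at h3
      nlinarith [h3]
  have h1 : f 1 ≤ 1 := by
    by_contra hcon
    push_neg at hcon
    have hε : (0:ℝ) < (1 - 1/f 1)/2 := by
      have := hfpos 1
      have : 1/f 1 < 1 := by rw [div_lt_one (hfpos 1)]; exact hcon
      linarith
    have := (key _ hε).1
    have hf1 := hfpos 1
    have h2 : (1 - (1 - 1/f 1)/2) * f 1 = f 1 - (f 1 - 1)/2 := by
      field_simp
    rw [h2] at this
    nlinarith
  have h2 : 1 ≤ f 1 := by
    by_contra hcon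
    push_neg at hcon
    have hε : (0:ℝ) < (1 - f 1)/2 := by linarith
    have := (key _ hε).2
    nlinarith
  linarith

set_option maxHeartbeats 2000000 in
lemma almost_mult (f : ℕ → ℝ) (g : ℝ → ℝ)
    (hfpos : ∀ n, 0 < f n)
    (hgpos : ∀ x : ℝ, 0 < x → 0 < g x)
    (hstar : ∀ n : ℕ, 0 < n → ∀ ε : ℝ, 0 < ε → ε < 1 → ∃ X : ℝ, 0 < X ∧ ∀ x : ℝ, X ≤ x →
      f n * g x ≤ ((1 + ε)/(1 - ε)^2) * g ((n:ℝ) * ((1 + ε) * x)))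
    (hss : ∀ n : ℕ, 0 < n → ∀ ε : ℝ, 0 < ε → ε < 1 → ∃ X : ℝ, 0 < X ∧ ∀ x : ℝ, X ≤ x →
      g ((n:ℝ) * x) ≤ ((1 + ε)/(1 - ε)^2) * (f n * g ((1 + ε) * x)))
    (hwin : ∀ ε : ℝ, 0 < ε → ε ≤ 1/3 → ∃ X : ℝ, 0 < X ∧ ∀ x : ℝ, X ≤ x →
      g ((1 + ε) * x) ≤ ((1 + ε)/(1 - ε)^2 * f 2) * g x)
    (hmono : ∀ x y : ℝ, 0 < x → x ≤ y → g x ≤ g y) :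
    ∃ Q : ℝ, 1 ≤ Q ∧
      (∀ n m : ℕ, 0 < n → 0 < m →
        f (n * m) ≤ Q * (f n * f m) ∧ f n * f m ≤ Q * f (n * m)) ∧
      (∀ n m : ℕ, 0 < n → n ≤ m → f n ≤ Q * f m) := by
  set ε : ℝ := 1/4 with hεdef
  have hε : (0:ℝ) < ε := by norm_num
  have hε1 : ε < 1 := by norm_num
  have hε3 : ε ≤ 1/3 := by norm_num
  set A : ℝ := (1 + ε)/(1 - ε)^2 with hAdef
  have hA : 0 < A := by rw [hAdef]; positivity
  set K : ℝ := A * f 2 with hKdef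
  have hK : 0 < K := mul_pos hA (hfpos 2)
  set P : ℝ := A * K with hPdef
  have hP : 0 < P := mul_pos hA hK
  have hstep : ∀ t : ℝ, 1 ≤ t → ∀ u : ℝ, 0 < u → u ≤ t * u := fun t ht u hu => by nlinarith
  refine ⟨P^3 + P^2 + 1, by nlinarith [pow_pos hP 3, pow_pos hP 2], ?_, ?_⟩
  · intro n m hn hm
    have hn1 : (1:ℝ) ≤ n := by exact_mod_cast hn
    have hm1 : (1:ℝ) ≤ m := by exact_mod_cast hm
    have hfn := hfpos n
    have hfm := hfpos m
    have hfnm := hfpos (n * m)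
    obtain ⟨XW, hXW, w⟩ := hwin ε hε hε3
    constructor
    · -- f (n m) ≤ Q f n f m
      obtain ⟨X1, hX1, s1⟩ := hstar (n*m) (Nat.mul_pos hn hm) ε hε hε1
      obtain ⟨X2, hX2, s2⟩ := hss n hn ε hε hε1
      obtain ⟨X3, hX3, s3⟩ := hss m hm ε hε hε1
      set x : ℝ := max (max X1 X2) (max X3 XW) with hxdef
      have hx1 : X1 ≤ x := le_trans (le_max_left _ _) (le_max_left _ _)
      have hx2 : X2 ≤ x := le_trans (le_max_right _ _) (le_max_left _ _)
      have hx3 : X3 ≤ x := le_trans (le_max_left _ _) (le_max_right _ _)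
      have hxW : XW ≤ x := le_trans (le_max_right _ _) (le_max_right _ _)
      have hxpos : 0 < x := lt_of_lt_of_le hX1 hx1
      have hgx : 0 < g x := hgpos x hxpos
      have c1 : f (n*m) * g x ≤ A * g ((n:ℝ) * ((m:ℝ) * ((1+ε)*x))) := by
        have := s1 x hx1
        have e1 : ((n*m:ℕ):ℝ) * ((1+ε)*x) = (n:ℝ) * ((m:ℝ) * ((1+ε)*x)) := by
          push_cast; ring
        rwa [e1] at this
      have hbig1 : x ≤ (1+ε)*x := hstep _ (by linarith) _ hxpos
      have hbig2 : (1+ε)*x ≤ (m:ℝ) * ((1+ε)*x) := hstep _ hm1 _ (by linarith)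
      have c2 : g ((n:ℝ) * ((m:ℝ) * ((1+ε)*x))) ≤
          A * (f n * g ((1+ε) * ((m:ℝ) * ((1+ε)*x)))) :=
        s2 _ (le_trans hx2 (le_trans hbig1 hbig2))
      have c3 : g ((1+ε) * ((m:ℝ) * ((1+ε)*x))) ≤ K * g ((m:ℝ) * ((1+ε)*x)) :=
        w _ (le_trans hxW (le_trans hbig1 hbig2))
      have c4 : g ((m:ℝ) * ((1+ε)*x)) ≤ A * (f m * g ((1+ε) * ((1+ε)*x))) :=
        s3 _ (le_trans hx3 hbig1)
      have c5 : g ((1+ε) * ((1+ε)*x)) ≤ K * g ((1+ε)*x) :=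
        w _ (le_trans hxW hbig1)
      have c6 : g ((1+ε)*x) ≤ K * g x := w x hxW
      have chain : f (n*m) * g x ≤ P^3 * (f n * f m) * g x := by
        calc f (n*m) * g x ≤ A * g ((n:ℝ) * ((m:ℝ) * ((1+ε)*x))) := c1
          _ ≤ A * (A * (f n * g ((1+ε) * ((m:ℝ) * ((1+ε)*x))))) := by gcongr
          _ ≤ A * (A * (f n * (K * g ((m:ℝ) * ((1+ε)*x))))) := by gcongr
          _ ≤ A * (A * (f n * (K * (A * (f m * g ((1+ε) * ((1+ε)*x))))))) := by gcongr
          _ ≤ A * (A * (f n * (K * (A * (f m * (K * g ((1+ε)*x))))))) := by gcongr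
          _ ≤ A * (A * (f n * (K * (A * (f m * (K * (K * g x))))))) := by gcongr
          _ = P^3 * (f n * f m) * g x := by rw [hPdef]; ring
      have h7 : f (n*m) ≤ P^3 * (f n * f m) := le_of_mul_le_mul_right chain hgx
      nlinarith [mul_pos hfn hfm]
    · -- f n f m ≤ Q f (n m)
      obtain ⟨X1, hX1, s1⟩ := hstar m hm ε hε hε1
      obtain ⟨X2, hX2, s2⟩ := hstar n hn ε hε hε1
      obtain ⟨X3, hX3, s3⟩ := hss (n*m) (Nat.mul_pos hn hm) ε hε hε1
      set x : ℝ := max (max X1 X2) (max X3 XW) with hxdef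
      have hx1 : X1 ≤ x := le_trans (le_max_left _ _) (le_max_left _ _)
      have hx2 : X2 ≤ x := le_trans (le_max_right _ _) (le_max_left _ _)
      have hx3 : X3 ≤ x := le_trans (le_max_left _ _) (le_max_right _ _)
      have hxW : XW ≤ x := le_trans (le_max_right _ _) (le_max_right _ _)
      have hxpos : 0 < x := lt_of_lt_of_le hX1 hx1
      have hgx : 0 < g x := hgpos x hxpos
      have c1 : f m * g x ≤ A * g ((m:ℝ) * ((1+ε)*x)) := s1 x hx1
      have hnm1' : (1:ℝ) ≤ ((n*m:ℕ):ℝ) := by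
        have : (1:ℕ) ≤ n*m := Nat.mul_pos hn hm
        exact_mod_cast this
      have hbig1 : x ≤ (1+ε)*x := hstep _ (by linarith) _ hxpos
      have hbig2 : (1+ε)*x ≤ (m:ℝ) * ((1+ε)*x) := hstep _ hm1 _ (by linarith)
      have hbig3 : x ≤ ((n*m:ℕ):ℝ) * x := hstep _ hnm1' _ hxpos
      have hbig4 : ((n*m:ℕ):ℝ) * x ≤ (1+ε) * (((n*m:ℕ):ℝ) * x) :=
        hstep _ (by linarith) _ (lt_of_lt_of_le hxpos hbig3)
      have c2 : f n * g ((m:ℝ) * ((1+ε)*x)) ≤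
          A * g ((n:ℝ) * ((1+ε) * ((m:ℝ) * ((1+ε)*x)))) :=
        s2 _ (le_trans hx2 (le_trans hbig1 hbig2))
      have e1 : (n:ℝ) * ((1+ε) * ((m:ℝ) * ((1+ε)*x))) =
          (1+ε) * ((1+ε) * (((n*m:ℕ):ℝ) * x)) := by push_cast; ring
      have c3 : g ((1+ε) * ((1+ε) * (((n*m:ℕ):ℝ) * x))) ≤
          K * g ((1+ε) * (((n*m:ℕ):ℝ) * x)) :=
        w _ (le_trans hxW (le_trans hbig3 hbig4))
      have c4 : g ((1+ε) * (((n*m:ℕ):ℝ) * x)) ≤ K * g (((n*m:ℕ):ℝ) * x) :=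
        w _ (le_trans hxW hbig3)
      have c5 : g (((n*m:ℕ):ℝ) * x) ≤ A * (f (n*m) * g ((1+ε)*x)) := s3 x hx3
      have c6 : g ((1+ε)*x) ≤ K * g x := w x hxW
      have hgm : 0 < g ((m:ℝ) * ((1+ε)*x)) :=
        hgpos _ (lt_of_lt_of_le hxpos (le_trans hbig1 hbig2))
      have chain : (f n * f m) * g x ≤ P^3 * f (n*m) * g x := by
        calc (f n * f m) * g x = f n * (f m * g x) := by ring
          _ ≤ f n * (A * g ((m:ℝ) * ((1+ε)*x))) := by gcongr
          _ = A * (f n * g ((m:ℝ) * ((1+ε)*x))) := by ring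
          _ ≤ A * (A * g ((n:ℝ) * ((1+ε) * ((m:ℝ) * ((1+ε)*x))))) := by gcongr
          _ = A * (A * g ((1+ε) * ((1+ε) * (((n*m:ℕ):ℝ) * x)))) := by rw [e1]
          _ ≤ A * (A * (K * g ((1+ε) * (((n*m:ℕ):ℝ) * x)))) := by gcongr
          _ ≤ A * (A * (K * (K * g (((n*m:ℕ):ℝ) * x)))) := by gcongr
          _ ≤ A * (A * (K * (K * (A * (f (n*m) * g ((1+ε)*x)))))) := by gcongr
          _ ≤ A * (A * (K * (K * (A * (f (n*m) * (K * g x)))))) := by gcongr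
          _ = P^3 * f (n*m) * g x := by rw [hPdef]; ring
      have h7 : f n * f m ≤ P^3 * f (n*m) := le_of_mul_le_mul_right chain hgx
      nlinarith [hfnm]
  · -- monotonicity
    intro n m hn hnm
    have hm : 0 < m := lt_of_lt_of_le hn hnm
    have hn1 : (1:ℝ) ≤ n := by exact_mod_cast hn
    have hm1 : (1:ℝ) ≤ m := by exact_mod_cast hm
    have hnm1 : (n:ℝ) ≤ m := by exact_mod_cast hnm
    have hfn := hfpos n
    have hfm := hfpos m
    obtain ⟨XW, hXW, w⟩ := hwin ε hε hε3
    obtain ⟨X1, hX1, s1⟩ := hstar n hn ε hε hε1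
    obtain ⟨X2, hX2, s2⟩ := hss m hm ε hε hε1
    set x : ℝ := max (max X1 X2) XW with hxdef
    have hx1 : X1 ≤ x := le_trans (le_max_left _ _) (le_max_left _ _)
    have hx2 : X2 ≤ x := le_trans (le_max_right _ _) (le_max_left _ _)
    have hxW : XW ≤ x := le_max_right _ _
    have hxpos : 0 < x := lt_of_lt_of_le hX1 hx1
    have hgx : 0 < g x := hgpos x hxpos
    have c1 : f n * g x ≤ A * g ((n:ℝ) * ((1+ε)*x)) := s1 x hx1
    have hbig1 : x ≤ (1+ε)*x := hstep _ (by linarith) _ hxpos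
    have hbig2 : (1+ε)*x ≤ (m:ℝ) * ((1+ε)*x) := hstep _ hm1 _ (by linarith)
    have hbig2' : (1+ε)*x ≤ (n:ℝ) * ((1+ε)*x) := hstep _ hn1 _ (by linarith)
    have c2 : g ((n:ℝ) * ((1+ε)*x)) ≤ g ((m:ℝ) * ((1+ε)*x)) := by
      apply hmono _ _ (lt_of_lt_of_le hxpos (le_trans hbig1 hbig2'))
      have : (0:ℝ) ≤ (1+ε)*x := by linarith
      exact mul_le_mul_of_nonneg_right hnm1 this
    have c3 : g ((m:ℝ) * ((1+ε)*x)) ≤ A * (f m * g ((1+ε) * ((1+ε)*x))) :=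
      s2 _ (le_trans hx2 hbig1)
    have c4 : g ((1+ε) * ((1+ε)*x)) ≤ K * g ((1+ε)*x) :=
      w _ (le_trans hxW hbig1)
    have c5 : g ((1+ε)*x) ≤ K * g x := w x hxW
    have chain : f n * g x ≤ P^2 * f m * g x := by
      calc f n * g x ≤ A * g ((n:ℝ) * ((1+ε)*x)) := c1
        _ ≤ A * g ((m:ℝ) * ((1+ε)*x)) := by gcongr
        _ ≤ A * (A * (f m * g ((1+ε) * ((1+ε)*x)))) := by gcongr
        _ ≤ A * (A * (f m * (K * g ((1+ε)*x)))) := by gcongr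
        _ ≤ A * (A * (f m * (K * (K * g x)))) := by gcongr
        _ = P^2 * f m * g x := by rw [hPdef]; ring
    have h7 : f n ≤ P^2 * f m := le_of_mul_le_mul_right chain hgx
    nlinarith [hfm]

lemma L_exists (h : ℕ → ℝ) (d : ℝ) (hd : 0 ≤ d) (h1 : h 1 = 0)
    (hadd₁ : ∀ n m : ℕ, 0 < n → 0 < m → h (n*m) ≤ h n + h m + d)
    (hadd₂ : ∀ n m : ℕ, 0 < n → 0 < m → h n + h m ≤ h (n*m) + d) :
    ∀ n : ℕ, 0 < n → ∃ L : ℝ, Tendsto (fun k : ℕ => h (n^k) / k) atTop (𝓝 L) := by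
  intro n hn
  set u : ℕ → ℝ := fun k => h (n^k) + d with hu
  have hsub : Subadditive u := by
    intro j k
    have e : n^(j+k) = n^j * n^k := pow_add n j k
    have := hadd₁ (n^j) (n^k) (pow_pos hn j) (pow_pos hn k)
    simp only [hu]
    rw [e]
    linarith
  have hlow : ∀ k : ℕ, (k:ℝ) * (h n - d) ≤ h (n^k) := by
    intro k
    induction k with
    | zero => simp [h1]
    | succ k ih =>
      have e : n^(k+1) = n^k * n := pow_succ n k
      have := hadd₂ (n^k) n (pow_pos hn k) hn
      rw [e]
      push_cast
      nlinarith
  have hbdd : BddBelow (Set.range fun k : ℕ => u k / k) := by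
    refine ⟨min 0 (h n - d), ?_⟩
    rintro y ⟨k, rfl⟩
    rcases Nat.eq_zero_or_pos k with rfl | hk
    · simp
    · have hk' : (0:ℝ) < k := by exact_mod_cast hk
      have : (h n - d) ≤ u k / k := by
        rw [le_div_iff₀ hk']
        have := hlow k
        simp only [hu]
        linarith
      exact le_trans (min_le_right _ _) this
  have hlim := hsub.tendsto_lim hbdd
  refine ⟨hsub.lim, ?_⟩
  have h2 : Tendsto (fun k : ℕ => u k / k - d / k) atTop (𝓝 (hsub.lim - 0)) :=
    hlim.sub (tendsto_const_div_atTop_nhds_zero_nat d)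
  rw [sub_zero] at h2
  convert h2 using 2 with k
  rw [div_sub_div_same]
  simp only [hu]
  ring_nf

set_option maxHeartbeats 1000000 in
lemma L_structure (h : ℕ → ℝ) (d : ℝ) (hd : 0 ≤ d) (h1 : h 1 = 0)
    (hadd₁ : ∀ n m : ℕ, 0 < n → 0 < m → h (n*m) ≤ h n + h m + d)
    (hadd₂ : ∀ n m : ℕ, 0 < n → 0 < m → h n + h m ≤ h (n*m) + d)
    (hmono : ∀ n m : ℕ, 0 < n → n ≤ m → h n ≤ h m + d) :
    ∃ c : ℝ, ∀ n : ℕ, 0 < n → |h n - c * Real.log n| ≤ d := by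
  have hLex' : ∀ n : ℕ, ∃ L : ℝ, 0 < n →
      Tendsto (fun k : ℕ => h (n^k) / k) atTop (𝓝 L) := by
    intro n
    rcases Nat.eq_zero_or_pos n with rfl | hn
    · exact ⟨0, fun hc => absurd hc (lt_irrefl 0)⟩
    · obtain ⟨L, hL⟩ := L_exists h d hd h1 hadd₁ hadd₂ n hn
      exact ⟨L, fun _ => hL⟩
  choose L hL using hLex'
  -- upper and lower bounds on h (n^k)
  have hpowup : ∀ n : ℕ, 0 < n → ∀ k : ℕ, h (n^k) ≤ k * (h n + d) := by
    intro n hn k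
    induction k with
    | zero => simp [h1]
    | succ k ih =>
      have e : n^(k+1) = n^k * n := pow_succ n k
      have := hadd₁ (n^k) n (pow_pos hn k) hn
      rw [e]
      push_cast
      nlinarith
  have hpowlo : ∀ n : ℕ, 0 < n → ∀ k : ℕ, (k:ℝ) * (h n - d) ≤ h (n^k) := by
    intro n hn k
    induction k with
    | zero => simp [h1]
    | succ k ih =>
      have e : n^(k+1) = n^k * n := pow_succ n k
      have := hadd₂ (n^k) n (pow_pos hn k) hn
      rw [e]
      push_cast
      nlinarith
  have hLle : ∀ n : ℕ, 0 < n → L n ≤ h n + d := by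
    intro n hn
    apply le_of_tendsto (hL n hn)
    filter_upwards [eventually_ge_atTop 1] with k hk
    have hk' : (0:ℝ) < k := by exact_mod_cast hk
    rw [div_le_iff₀ hk']
    calc h (n^k) ≤ k * (h n + d) := hpowup n hn k
      _ = (h n + d) * k := by ring
  have hLge : ∀ n : ℕ, 0 < n → h n - d ≤ L n := by
    intro n hn
    apply ge_of_tendsto (hL n hn)
    filter_upwards [eventually_ge_atTop 1] with k hk
    have hk' : (0:ℝ) < k := by exact_mod_cast hk
    rw [le_div_iff₀ hk']
    calc (h n - d) * k = k * (h n - d) := by ring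
      _ ≤ h (n^k) := hpowlo n hn k
  have hLmono : ∀ n m : ℕ, 0 < n → 0 < m → n ≤ m → L n ≤ L m := by
    intro n m hn hm hnm
    have h2 : Tendsto (fun k : ℕ => h (m^k)/k + d/k) atTop (𝓝 (L m + 0)) :=
      (hL m hm).add (tendsto_const_div_atTop_nhds_zero_nat d)
    rw [add_zero] at h2
    apply le_of_tendsto_of_tendsto' (hL n hn) h2
    intro k
    rcases Nat.eq_zero_or_pos k with rfl | hk
    · simp
    · have hk' : (0:ℝ) < k := by exact_mod_cast hk
      have h3 : h (n^k) ≤ h (m^k) + d :=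
        hmono (n^k) (m^k) (pow_pos hn k) (Nat.pow_le_pow_left hnm k)
      rw [← add_div]
      gcongr
  have hL1 : L 1 = 0 := by
    have h2 : (fun k : ℕ => h (1^k) / k) = fun _ : ℕ => (0:ℝ) := by
      funext k
      simp [h1]
    have := hL 1 one_pos
    rw [h2] at this
    exact tendsto_nhds_unique this tendsto_const_nhds
  have hLadd : ∀ n m : ℕ, 0 < n → 0 < m → L (n*m) = L n + L m := by
    intro n m hn hm
    have base : Tendsto (fun k : ℕ => h (n^k)/k + h (m^k)/k) atTop (𝓝 (L n + L m)) :=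
      (hL n hn).add (hL m hm)
    have herr : Tendsto
        (fun k : ℕ => h ((n*m)^k)/k - (h (n^k)/k + h (m^k)/k)) atTop (𝓝 0) := by
      apply squeeze_zero_norm' _ (tendsto_const_div_atTop_nhds_zero_nat d)
      filter_upwards [eventually_ge_atTop 1] with k hk
      have hk' : (0:ℝ) < k := by exact_mod_cast hk
      have e : (n*m)^k = n^k * m^k := mul_pow n m k
      have e1 := hadd₁ (n^k) (m^k) (pow_pos hn k) (pow_pos hm k)
      have e2 := hadd₂ (n^k) (m^k) (pow_pos hn k) (pow_pos hm k)
      have e5 : h ((n*m)^k)/k - (h (n^k)/k + h (m^k)/k)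
          = (h (n^k * m^k) - h (n^k) - h (m^k))/k := by rw [e]; ring
      rw [e5, Real.norm_eq_abs, abs_div, abs_of_pos hk']
      apply div_le_div_of_nonneg_right _ hk'.le
      rw [abs_le]
      constructor <;> linarith
    have hsum : Tendsto (fun k : ℕ => (h (n^k)/k + h (m^k)/k) +
        (h ((n*m)^k)/k - (h (n^k)/k + h (m^k)/k))) atTop (𝓝 (L n + L m + 0)) :=
      base.add herr
    rw [add_zero] at hsum
    have e3 : (fun k : ℕ => (h (n^k)/k + h (m^k)/k) +
        (h ((n*m)^k)/k - (h (n^k)/k + h (m^k)/k))) = fun k : ℕ => h ((n*m)^k)/k := by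
      funext k; ring
    rw [e3] at hsum
    exact tendsto_nhds_unique (hL (n*m) (Nat.mul_pos hn hm)) hsum
  have hLpow : ∀ n : ℕ, 0 < n → ∀ k : ℕ, L (n^k) = k * L n := by
    intro n hn k
    induction k with
    | zero => simp [hL1]
    | succ k ih =>
      rw [pow_succ, hLadd (n^k) n (pow_pos hn k) hn, ih]
      push_cast
      ring
  -- the constant
  have hlog2 : (0:ℝ) < Real.log 2 := Real.log_pos (by norm_num)
  refine ⟨L 2 / Real.log 2, fun n hn => ?_⟩
  have hcn : L n = L 2 / Real.log 2 * Real.log n := by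
    rcases eq_or_lt_of_le (Nat.one_le_iff_ne_zero.mpr hn.ne') with h1n | h2n
    · rw [← h1n]
      simp [hL1]
    · have hn2 : 2 ≤ n := h2n
      have hn2' : (2:ℝ) ≤ (n:ℝ) := by exact_mod_cast hn2
      have hlogn : (0:ℝ) < Real.log n := Real.log_pos (by linarith)
      set r : ℝ := Real.log n / Real.log 2 with hr
      have hr0 : 0 < r := div_pos hlogn hlog2
      have hrl : r * Real.log 2 = Real.log n := div_mul_cancel₀ _ hlog2.ne'
      have key : ∀ k : ℕ, 1 ≤ k → |L n - r * L 2| ≤ |L 2| / k := by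
        intro k hk
        have hk' : (0:ℝ) < k := by exact_mod_cast hk
        set j := ⌈(k:ℝ)*r⌉₊ with hj0
        set j' := ⌊(k:ℝ)*r⌋₊ with hj'0
        have hkr0 : (0:ℝ) ≤ (k:ℝ)*r := by positivity
        have hj : (k:ℝ)*r ≤ j := Nat.le_ceil _
        have hj' : (j':ℝ) ≤ (k:ℝ)*r := Nat.floor_le hkr0
        have hjj' : (j:ℝ) ≤ (j':ℝ) + 1 := by exact_mod_cast Nat.ceil_le_floor_add_one _
        have hnk2j : n^k ≤ 2^j := by
          have hreal : ((n:ℝ))^k ≤ (2:ℝ)^j := by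
            rw [← Real.exp_log (pow_pos (by exact_mod_cast hn : (0:ℝ) < n) k),
              ← Real.exp_log (pow_pos (by norm_num : (0:ℝ) < 2) j)]
            apply Real.exp_le_exp.mpr
            rw [Real.log_pow, Real.log_pow]
            have : (k:ℝ) * Real.log n = ((k:ℝ)*r) * Real.log 2 := by
              rw [mul_assoc, hrl]
            rw [this]
            exact mul_le_mul_of_nonneg_right hj hlog2.le
          exact_mod_cast hreal
        have h2j'nk : 2^j' ≤ n^k := by
          have hreal : (2:ℝ)^j' ≤ ((n:ℝ))^k := by
            rw [← Real.exp_log (pow_pos (by exact_mod_cast hn : (0:ℝ) < n) k),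
              ← Real.exp_log (pow_pos (by norm_num : (0:ℝ) < 2) j')]
            apply Real.exp_le_exp.mpr
            rw [Real.log_pow, Real.log_pow]
            have : (k:ℝ) * Real.log n = ((k:ℝ)*r) * Real.log 2 := by
              rw [mul_assoc, hrl]
            rw [this]
            exact mul_le_mul_of_nonneg_right hj' hlog2.le
          exact_mod_cast hreal
        have c1 : (k:ℝ) * L n ≤ (j:ℝ) * L 2 := by
          have := hLmono (n^k) (2^j) (pow_pos hn k) (pow_pos two_pos j) hnk2j
          rwa [hLpow n hn k, hLpow 2 two_pos j] at this
        have c2 : (j':ℝ) * L 2 ≤ (k:ℝ) * L n := by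
          have := hLmono (2^j') (n^k) (pow_pos two_pos j') (pow_pos hn k) h2j'nk
          rwa [hLpow n hn k, hLpow 2 two_pos j'] at this
        have habs : |(k:ℝ) * L n - (k:ℝ)*r*L 2| ≤ |L 2| := by
          rcases le_or_gt 0 (L 2) with hL2 | hL2
          · have u1 : (k:ℝ)*r*L 2 ≤ ((j':ℝ)+1) * L 2 :=
              mul_le_mul_of_nonneg_right (by linarith) hL2
            have u2 : (j':ℝ) * L 2 ≤ (k:ℝ)*r*L 2 :=
              mul_le_mul_of_nonneg_right hj' hL2
            have u3 : (j:ℝ)*L 2 ≤ ((j':ℝ)+1)*L 2 :=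
              mul_le_mul_of_nonneg_right hjj' hL2
            rw [abs_le]
            constructor
            · nlinarith [neg_abs_le (L 2), le_abs_self (L 2)]
            · nlinarith [neg_abs_le (L 2), le_abs_self (L 2)]
          · have u1 : ((j':ℝ)+1) * L 2 ≤ (k:ℝ)*r*L 2 :=
              mul_le_mul_of_nonpos_right (by linarith) hL2.le
            have u2 : (k:ℝ)*r*L 2 ≤ (j':ℝ) * L 2 :=
              mul_le_mul_of_nonpos_right hj' hL2.le
            have u3 : ((j':ℝ)+1)*L 2 ≤ (j:ℝ)*L 2 :=
              mul_le_mul_of_nonpos_right hjj' hL2.le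
            rw [abs_le]
            constructor
            · nlinarith [neg_abs_le (L 2), le_abs_self (L 2)]
            · nlinarith [neg_abs_le (L 2), le_abs_self (L 2)]
        have e4 : (k:ℝ) * L n - (k:ℝ)*r*L 2 = (k:ℝ) * (L n - r * L 2) := by ring
        rw [e4, abs_mul, abs_of_pos hk'] at habs
        rw [le_div_iff₀ hk']
        linarith [habs]
      by_contra hne
      have ht : 0 < |L n - r * L 2| := by
        apply abs_pos.mpr
        intro h0
        apply hne
        have : L n = r * L 2 := by linarith [sub_eq_zero.mp h0]
        rw [this, hr]
        ring
      obtain ⟨k, hk⟩ := exists_nat_gt (|L 2| / |L n - r * L 2|)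
      have hk1 : 1 ≤ k + 1 := Nat.le_add_left 1 k
      have h5 := key (k+1) hk1
      have hk1' : (0:ℝ) < ((k+1:ℕ):ℝ) := by positivity
      have h6 : |L 2| / ((k+1:ℕ):ℝ) < |L n - r * L 2| := by
        rw [div_lt_iff₀ hk1']
        have h7 : |L 2| / |L n - r * L 2| < ((k+1:ℕ):ℝ) := by
          push_cast
          push_cast at hk
          linarith
        rw [div_lt_iff₀ ht] at h7
        linarith [h7]
      linarith
  rw [← hcn, abs_le]
  constructor <;> [linarith [hLle n hn]; linarith [hLge n hn]]

lemma pow_rpow_comm (x : ℝ) (hx : 0 < x) (k : ℕ) (c : ℝ) : (x^k)^c = (x^c)^k := by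
  rw [← Real.rpow_natCast x k, ← Real.rpow_natCast (x^c) k,
    ← Real.rpow_mul hx.le, ← Real.rpow_mul hx.le, mul_comm]

lemma eps_choice (t C : ℝ) (ht : 1 < t) (hC : 0 ≤ C) :
    ∃ ε : ℝ, 0 < ε ∧ ε ≤ 1/3 ∧ (1+ε)/(1-ε)^2 * (1+ε)^C < t := by
  set F : ℝ → ℝ := fun ε => (1+ε)/(1-ε)^2 * (1+ε)^C with hF
  have hcont : ContinuousAt F 0 := by
    apply ContinuousAt.mul
    · apply ContinuousAt.div
      · exact (continuous_const.add continuous_id).continuousAt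
      · exact (((continuous_const.sub continuous_id).pow 2)).continuousAt
      · norm_num
    · apply ContinuousAt.rpow_const
      · exact (continuous_const.add continuous_id).continuousAt
      · left; norm_num
  have hF0 : F 0 = 1 := by
    simp [hF, Real.one_rpow]
  have hev : ∀ᶠ ε in 𝓝 (0:ℝ), F ε < t := by
    apply hcont.eventually_lt_const
    rw [hF0]; exact ht
  rw [Metric.eventually_nhds_iff] at hev
  obtain ⟨δ, hδ, hball⟩ := hev
  refine ⟨min (δ/2) (1/3), by positivity, min_le_right _ _, ?_⟩
  have := hball (y := min (δ/2) (1/3)) ?_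
  · exact this
  · rw [Real.dist_eq, sub_zero, abs_of_pos (by positivity)]
    calc min (δ/2) (1/3) ≤ δ/2 := min_le_left _ _
      _ < δ := by linarith

lemma iter_up (f : ℕ → ℝ) (g : ℝ → ℝ) (hfpos : ∀ n, 0 < f n)
    (n : ℕ) (hn : 0 < n) (ε A X : ℝ) (hε : 0 < ε) (hA : 0 < A) (hX : 0 < X)
    (hstar : ∀ x : ℝ, X ≤ x → f n * g x ≤ A * g ((n:ℝ)*((1+ε)*x))) :
    ∀ k : ℕ, ∀ x : ℝ, X ≤ x → (f n)^k * g x ≤ A^k * g (((n:ℝ)*(1+ε))^k * x) := by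
  have hn1 : (1:ℝ) ≤ n := by exact_mod_cast hn
  have hs1 : (1:ℝ) ≤ (n:ℝ)*(1+ε) := by nlinarith
  intro k
  induction k with
  | zero => intro x hx; simp
  | succ k ih =>
    intro x hx
    have hxpos : 0 < x := lt_of_lt_of_le hX hx
    have hsk : (1:ℝ) ≤ ((n:ℝ)*(1+ε))^k := one_le_pow₀ hs1
    have hX' : X ≤ ((n:ℝ)*(1+ε))^k * x := by nlinarith
    calc (f n)^(k+1) * g x = f n * ((f n)^k * g x) := by ring
      _ ≤ f n * (A^k * g (((n:ℝ)*(1+ε))^k * x)) :=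
          mul_le_mul_of_nonneg_left (ih x hx) (hfpos n).le
      _ = A^k * (f n * g (((n:ℝ)*(1+ε))^k * x)) := by ring
      _ ≤ A^k * (A * g ((n:ℝ)*((1+ε)*(((n:ℝ)*(1+ε))^k * x)))) :=
          mul_le_mul_of_nonneg_left (hstar _ hX') (pow_nonneg hA.le k)
      _ = A^(k+1) * g (((n:ℝ)*(1+ε))^(k+1) * x) := by
          rw [show (n:ℝ)*((1+ε)*(((n:ℝ)*(1+ε))^k * x)) = ((n:ℝ)*(1+ε))^(k+1) * x by
            rw [pow_succ]; ring]
          ring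

lemma iter_lo (f : ℕ → ℝ) (g : ℝ → ℝ) (hfpos : ∀ n, 0 < f n)
    (n : ℕ) (hn : 0 < n) (ε A X : ℝ) (hε : 0 < ε) (hA : 0 < A) (hX : 0 < X)
    (hss : ∀ x : ℝ, X ≤ x → g ((n:ℝ)*x) ≤ A * (f n * g ((1+ε)*x))) :
    ∀ k : ℕ, ∀ x : ℝ, X ≤ x → g ((n:ℝ)^k * x) ≤ (A * f n)^k * g ((1+ε)^k * x) := by
  have hn1 : (1:ℝ) ≤ n := by exact_mod_cast hn
  intro k
  induction k with
  | zero => intro x hx; simp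
  | succ k ih =>
    intro x hx
    have hxpos : 0 < x := lt_of_lt_of_le hX hx
    have hnk : (1:ℝ) ≤ (n:ℝ)^k := one_le_pow₀ hn1
    have hX' : X ≤ (n:ℝ)^k * x := by nlinarith
    have hX'' : X ≤ (1+ε)*x := by nlinarith
    have c1 : g ((n:ℝ)^(k+1) * x) ≤ A * (f n * g ((1+ε)*((n:ℝ)^k * x))) := by
      rw [show (n:ℝ)^(k+1) * x = (n:ℝ)*((n:ℝ)^k * x) by rw [pow_succ]; ring]
      exact hss _ hX'
    have c2 : g ((n:ℝ)^k * ((1+ε)*x)) ≤ (A * f n)^k * g ((1+ε)^k * ((1+ε)*x)) :=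
      ih _ hX''
    calc g ((n:ℝ)^(k+1) * x) ≤ A * (f n * g ((1+ε)*((n:ℝ)^k * x))) := c1
      _ = A * (f n * g ((n:ℝ)^k * ((1+ε)*x))) := by rw [show (1+ε)*((n:ℝ)^k * x)
            = (n:ℝ)^k * ((1+ε)*x) by ring]
      _ ≤ A * (f n * ((A * f n)^k * g ((1+ε)^k * ((1+ε)*x)))) := by
          apply mul_le_mul_of_nonneg_left _ hA.le
          exact mul_le_mul_of_nonneg_left c2 (hfpos n).le
      _ = (A * f n)^(k+1) * g ((1+ε)^(k+1) * x) := by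
          rw [show (1+ε)^k * ((1+ε)*x) = (1+ε)^(k+1) * x by rw [pow_succ]; ring,
            pow_succ]
          ring

set_option maxHeartbeats 1000000 in
lemma upper_side (f : ℕ → ℝ) (g : ℝ → ℝ)
    (hfpos : ∀ n, 0 < f n)
    (hgpos : ∀ x : ℝ, 0 < x → 0 < g x)
    (hmono : ∀ x y : ℝ, 0 < x → x ≤ y → g x ≤ g y)
    (hstar : ∀ n : ℕ, 0 < n → ∀ ε : ℝ, 0 < ε → ε < 1 → ∃ X : ℝ, 0 < X ∧ ∀ x : ℝ, X ≤ x →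
      f n * g x ≤ ((1 + ε)/(1 - ε)^2) * g ((n:ℝ) * ((1 + ε) * x)))
    (hss : ∀ n : ℕ, 0 < n → ∀ ε : ℝ, 0 < ε → ε < 1 → ∃ X : ℝ, 0 < X ∧ ∀ x : ℝ, X ≤ x →
      g ((n:ℝ) * x) ≤ ((1 + ε)/(1 - ε)^2) * (f n * g ((1 + ε) * x)))
    (hwin : ∀ ε : ℝ, 0 < ε → ε ≤ 1/3 → ∃ X : ℝ, 0 < X ∧ ∀ x : ℝ, X ≤ x →
      g ((1 + ε) * x) ≤ ((1 + ε)/(1 - ε)^2 * f 2) * g x)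
    (c d : ℝ) (hd : 0 ≤ d)
    (hfup : ∀ N : ℕ, 0 < N → f N ≤ Real.exp d * (N:ℝ)^c)
    (n : ℕ) (hn : 0 < n) : f n ≤ (n:ℝ)^c := by
  by_contra hcon
  push_neg at hcon
  have hnr : (0:ℝ) < (n:ℝ) := by exact_mod_cast hn
  have hnc : (0:ℝ) < (n:ℝ)^c := Real.rpow_pos_of_pos hnr c
  obtain ⟨t, htdef⟩ : ∃ t : ℝ, t = f n / (n:ℝ)^c := ⟨_, rfl⟩
  have ht : 1 < t := htdef ▸ (one_lt_div hnc).mpr hcon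
  obtain ⟨ε, hε, hε3, hφ⟩ := eps_choice t |c| ht (abs_nonneg c)
  have hε1 : ε < 1 := by linarith
  obtain ⟨A, hAdef⟩ : ∃ A : ℝ, A = (1+ε)/(1-ε)^2 := ⟨_, rfl⟩
  have hApos : 0 < A := hAdef ▸ div_pos (by linarith) (pow_pos (by linarith) 2)
  have h1ε : (0:ℝ) < 1 + ε := by linarith
  obtain ⟨φ, hφdef⟩ : ∃ φ : ℝ, φ = A * (1+ε)^|c| := ⟨_, rfl⟩
  have hφ' : φ < t := by rw [hφdef, hAdef]; exact hφ
  have hφpos : 0 < φ := hφdef ▸ mul_pos hApos (Real.rpow_pos_of_pos h1ε _)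
  obtain ⟨Xn, hXn, sn⟩ := hstar n hn ε hε hε1
  obtain ⟨XW, hXW, w⟩ := hwin ε hε hε3
  rw [← hAdef] at sn w
  obtain ⟨K, hKdef⟩ : ∃ K : ℝ, K = A * f 2 := ⟨_, rfl⟩
  rw [← hKdef] at w
  have hKpos : 0 < K := hKdef ▸ mul_pos hApos (hfpos 2)
  obtain ⟨Const, hCdef⟩ : ∃ C : ℝ, C = A * Real.exp d * ((2:ℝ)^|c|) * K := ⟨_, rfl⟩
  have hcon2 : ∀ k : ℕ, (t/φ)^k ≤ Const := by
    intro k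
    have hMpos : 0 < ⌈(1+ε)^k⌉₊ := Nat.ceil_pos.mpr (by positivity)
    set M := ⌈(1+ε)^k⌉₊ with hMdef
    set N := n^k * M with hNdef
    have hNpos : 0 < N := Nat.mul_pos (pow_pos hn k) hMpos
    obtain ⟨XN, hXN, sN⟩ := hss N hNpos ε hε hε1
    rw [← hAdef] at sN
    set x : ℝ := max (max Xn XN) XW with hxdef
    have hx1 : Xn ≤ x := le_trans (le_max_left _ _) (le_max_left _ _)
    have hx2 : XN ≤ x := le_trans (le_max_right _ _) (le_max_left _ _)
    have hx3 : XW ≤ x := le_max_right _ _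
    have hxpos : 0 < x := lt_of_lt_of_le hXn hx1
    have hgx : 0 < g x := hgpos x hxpos
    have c1 := iter_up f g hfpos n hn ε A Xn hε hApos hXn sn k x hx1
    have hNcast : (N:ℝ) = (n:ℝ)^k * (M:ℝ) := by rw [hNdef]; push_cast; ring
    have hMge : (1+ε)^k ≤ (M:ℝ) := Nat.le_ceil _
    have harg : ((n:ℝ)*(1+ε))^k * x ≤ (N:ℝ)*x := by
      rw [mul_pow, hNcast]
      have h5 : (0:ℝ) < (n:ℝ)^k := pow_pos hnr k
      exact mul_le_mul_of_nonneg_right (mul_le_mul_of_nonneg_left hMge h5.le) hxpos.le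
    have c2 : g (((n:ℝ)*(1+ε))^k * x) ≤ g ((N:ℝ)*x) := by
      apply hmono _ _ _ harg
      exact mul_pos (pow_pos (mul_pos hnr h1ε) k) hxpos
    have c3 := sN x hx2
    have c4 := w x hx3
    have c5 : (f n)^k * g x ≤ A^k * (A * (f N * (K * g x))) := by
      calc (f n)^k * g x ≤ A^k * g (((n:ℝ)*(1+ε))^k * x) := c1
        _ ≤ A^k * g ((N:ℝ)*x) := mul_le_mul_of_nonneg_left c2 (pow_nonneg hApos.le k)
        _ ≤ A^k * (A * (f N * g ((1+ε)*x))) :=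
            mul_le_mul_of_nonneg_left c3 (pow_nonneg hApos.le k)
        _ ≤ A^k * (A * (f N * (K * g x))) := by
            apply mul_le_mul_of_nonneg_left _ (pow_nonneg hApos.le k)
            apply mul_le_mul_of_nonneg_left _ hApos.le
            exact mul_le_mul_of_nonneg_left c4 (hfpos N).le
    have c6 : (f n)^k ≤ A^k * (A * (f N * K)) := by
      have e : A^k * (A * (f N * (K * g x))) = (A^k * (A * (f N * K))) * g x := by ring
      rw [e] at c5
      exact le_of_mul_le_mul_right c5 hgx
    have c7 : f N ≤ Real.exp d * (N:ℝ)^c := hfup N hNpos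
    have hNle : (N:ℝ) ≤ (n:ℝ)^k * (2*(1+ε)^k) := by
      rw [hNcast]
      have h2 : (M:ℝ) < (1+ε)^k + 1 := Nat.ceil_lt_add_one (by positivity)
      have h4 : (1:ℝ) ≤ (1+ε)^k := one_le_pow₀ (by linarith)
      have h5 : (0:ℝ) < (n:ℝ)^k := pow_pos hnr k
      nlinarith
    have hNge : (n:ℝ)^k * (1+ε)^k ≤ (N:ℝ) := by
      rw [hNcast]
      have h5 : (0:ℝ) < (n:ℝ)^k := pow_pos hnr k
      nlinarith
    have hNc : (N:ℝ)^c ≤ (2:ℝ)^|c| * (((n:ℝ)^c)^k * ((1+ε)^|c|)^k) := by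
      rcases le_or_gt 0 c with hc0 | hc0
      · have habs : |c| = c := abs_of_nonneg hc0
        calc (N:ℝ)^c ≤ ((n:ℝ)^k * (2*(1+ε)^k))^c :=
              Real.rpow_le_rpow (Nat.cast_nonneg N) hNle hc0
          _ = ((n:ℝ)^k)^c * ((2:ℝ)^c * ((1+ε)^k)^c) := by
              rw [Real.mul_rpow (by positivity) (by positivity),
                Real.mul_rpow (by norm_num) (by positivity)]
          _ = (2:ℝ)^|c| * (((n:ℝ)^c)^k * ((1+ε)^|c|)^k) := by
              rw [habs, pow_rpow_comm _ hnr, pow_rpow_comm _ h1ε]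
              ring
      · have s1 : (N:ℝ)^c ≤ ((n:ℝ)^k * (1+ε)^k)^c :=
          Real.rpow_le_rpow_of_nonpos (by positivity) hNge hc0.le
        have s2 : ((n:ℝ)^k * (1+ε)^k)^c = ((n:ℝ)^c)^k * ((1+ε)^c)^k := by
          rw [Real.mul_rpow (by positivity) (by positivity),
            pow_rpow_comm _ hnr, pow_rpow_comm _ h1ε]
        have s3 : ((1+ε)^c)^k ≤ ((1+ε)^|c|)^k := by
          apply pow_le_pow_left₀ (Real.rpow_nonneg (by linarith) c)
          exact Real.rpow_le_rpow_of_exponent_le (by linarith) (le_abs_self c)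
        have s4 : (1:ℝ) ≤ (2:ℝ)^|c| := by
          rw [show (1:ℝ) = (2:ℝ)^(0:ℝ) from (Real.rpow_zero 2).symm]
          exact Real.rpow_le_rpow_of_exponent_le one_le_two (abs_nonneg c)
        have p1 : (0:ℝ) ≤ ((n:ℝ)^c)^k := pow_nonneg (Real.rpow_nonneg hnr.le c) k
        have p2 : (0:ℝ) ≤ ((1+ε)^|c|)^k := pow_nonneg (Real.rpow_nonneg h1ε.le _) k
        calc (N:ℝ)^c ≤ ((n:ℝ)^c)^k * ((1+ε)^c)^k := by rw [← s2]; exact s1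
          _ ≤ ((n:ℝ)^c)^k * ((1+ε)^|c|)^k := mul_le_mul_of_nonneg_left s3 p1
          _ = 1 * (((n:ℝ)^c)^k * ((1+ε)^|c|)^k) := (one_mul _).symm
          _ ≤ (2:ℝ)^|c| * (((n:ℝ)^c)^k * ((1+ε)^|c|)^k) :=
              mul_le_mul_of_nonneg_right s4 (mul_nonneg p1 p2)
    have hfneq : f n = t * (n:ℝ)^c := by
      rw [htdef, div_mul_cancel₀ _ hnc.ne']
    have E : (t * (n:ℝ)^c)^k ≤ Const * (φ * (n:ℝ)^c)^k := by
      rw [← hfneq]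
      calc (f n)^k ≤ A^k * (A * (f N * K)) := c6
        _ ≤ A^k * (A * ((Real.exp d * ((2:ℝ)^|c| * (((n:ℝ)^c)^k * ((1+ε)^|c|)^k))) * K)) := by
            apply mul_le_mul_of_nonneg_left _ (pow_nonneg hApos.le k)
            apply mul_le_mul_of_nonneg_left _ hApos.le
            apply mul_le_mul_of_nonneg_right _ hKpos.le
            calc f N ≤ Real.exp d * (N:ℝ)^c := c7
              _ ≤ Real.exp d * ((2:ℝ)^|c| * (((n:ℝ)^c)^k * ((1+ε)^|c|)^k)) :=
                  mul_le_mul_of_nonneg_left hNc (Real.exp_nonneg d)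
        _ = Const * (φ * (n:ℝ)^c)^k := by
            rw [hCdef, hφdef, mul_pow (A * (1+ε)^|c|) ((n:ℝ)^c) k,
              mul_pow A ((1+ε)^|c|) k]
            ring
    have E2 : t^k ≤ Const * φ^k := by
      have e1 : (t * (n:ℝ)^c)^k = t^k * ((n:ℝ)^c)^k := mul_pow _ _ _
      have e2 : Const * (φ * (n:ℝ)^c)^k = (Const * φ^k) * ((n:ℝ)^c)^k := by
        rw [mul_pow]; ring
      rw [e1, e2] at E
      exact le_of_mul_le_mul_right E (pow_pos hnc k)
    rw [div_pow, div_le_iff₀ (pow_pos hφpos k)]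
    linarith
  have h1φ : 1 < t/φ := (one_lt_div hφpos).mpr hφ'
  obtain ⟨k, hk⟩ :=
    ((tendsto_pow_atTop_atTop_of_one_lt h1φ).eventually_gt_atTop Const).exists
  exact absurd (hcon2 k) (not_le.mpr hk)

set_option maxHeartbeats 1000000 in
lemma lower_side (f : ℕ → ℝ) (g : ℝ → ℝ)
    (hfpos : ∀ n, 0 < f n)
    (hgpos : ∀ x : ℝ, 0 < x → 0 < g x)
    (hmono : ∀ x y : ℝ, 0 < x → x ≤ y → g x ≤ g y)
    (hstar : ∀ n : ℕ, 0 < n → ∀ ε : ℝ, 0 < ε → ε < 1 → ∃ X : ℝ, 0 < X ∧ ∀ x : ℝ, X ≤ x →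
      f n * g x ≤ ((1 + ε)/(1 - ε)^2) * g ((n:ℝ) * ((1 + ε) * x)))
    (hss : ∀ n : ℕ, 0 < n → ∀ ε : ℝ, 0 < ε → ε < 1 → ∃ X : ℝ, 0 < X ∧ ∀ x : ℝ, X ≤ x →
      g ((n:ℝ) * x) ≤ ((1 + ε)/(1 - ε)^2) * (f n * g ((1 + ε) * x)))
    (c d : ℝ) (hd : 0 ≤ d)
    (hflo : ∀ N : ℕ, 0 < N → Real.exp (-d) * (N:ℝ)^c ≤ f N)
    (n : ℕ) (hn2 : 2 ≤ n) : (n:ℝ)^c ≤ f n := by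
  by_contra hcon
  push_neg at hcon
  have hn : 0 < n := lt_of_lt_of_le two_pos hn2
  have hnr : (0:ℝ) < (n:ℝ) := by exact_mod_cast hn
  have hn2r : (2:ℝ) ≤ (n:ℝ) := by exact_mod_cast hn2
  have hnc : (0:ℝ) < (n:ℝ)^c := Real.rpow_pos_of_pos hnr c
  obtain ⟨t, htdef⟩ : ∃ t : ℝ, t = (n:ℝ)^c / f n := ⟨_, rfl⟩
  have ht : 1 < t := htdef ▸ (one_lt_div (hfpos n)).mpr hcon
  obtain ⟨ε, hε, hε3, hφ⟩ := eps_choice t |c| ht (abs_nonneg c)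
  have hε1 : ε < 1 := by linarith
  have h1ε : (0:ℝ) < 1 + ε := by linarith
  have h1ε1 : (1:ℝ) ≤ 1 + ε := by linarith
  obtain ⟨A, hAdef⟩ : ∃ A : ℝ, A = (1+ε)/(1-ε)^2 := ⟨_, rfl⟩
  have hApos : 0 < A := hAdef ▸ div_pos (by linarith) (pow_pos (by linarith) 2)
  obtain ⟨φ, hφdef⟩ : ∃ φ : ℝ, φ = A * (1+ε)^|c| := ⟨_, rfl⟩
  have hφ' : φ < t := by rw [hφdef, hAdef]; exact hφ
  have hφpos : 0 < φ := hφdef ▸ mul_pos hApos (Real.rpow_pos_of_pos h1ε _)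
  obtain ⟨Xs, hXs, ss⟩ := hss n hn ε hε hε1
  rw [← hAdef] at ss
  obtain ⟨Const, hCdef⟩ : ∃ C : ℝ,
    C = Real.exp d * A * ((4:ℝ)^|c|) * (1+ε)^|c| := ⟨_, rfl⟩
  have hcon2 : ∀ k : ℕ, 4*(1+ε)^(k+1) ≤ (n:ℝ)^k → (t/φ)^k ≤ Const := by
    intro k hk4
    have hek : (0:ℝ) < (1+ε)^k := pow_pos h1ε k
    have hek1 : (1:ℝ) ≤ (1+ε)^k := one_le_pow₀ h1ε1
    have hMpos : 0 < ⌈(1+ε)^k⌉₊ := Nat.ceil_pos.mpr hek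
    set M := ⌈(1+ε)^k⌉₊ with hMdef
    have hMr : (0:ℝ) < (M:ℝ) := by exact_mod_cast hMpos
    have hMge : (1+ε)^k ≤ (M:ℝ) := Nat.le_ceil _
    have hMle2 : (M:ℝ) ≤ 2*(1+ε)^k := by
      have h2 : (M:ℝ) < (1+ε)^k + 1 := Nat.ceil_lt_add_one hek.le
      linarith
    obtain ⟨q, hqdef⟩ : ∃ q : ℝ, q = (n:ℝ)^k / ((1+ε)*(M:ℝ)) := ⟨_, rfl⟩
    have hdenpos : (0:ℝ) < (1+ε)*(M:ℝ) := mul_pos h1ε hMr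
    have hq0 : 0 < q := hqdef ▸ div_pos (pow_pos hnr k) hdenpos
    have hq2 : 2 ≤ q := by
      rw [hqdef, le_div_iff₀ hdenpos]
      have e : (1+ε)^(k+1) = (1+ε)^k * (1+ε) := pow_succ _ _
      have h8 : 2*((1+ε)*(M:ℝ)) ≤ 4*(1+ε)^(k+1) := by
        calc 2*((1+ε)*(M:ℝ)) = (2*(1+ε))*(M:ℝ) := by ring
          _ ≤ (2*(1+ε))*(2*(1+ε)^k) := mul_le_mul_of_nonneg_left hMle2 (by linarith)
          _ = 4*(1+ε)^(k+1) := by rw [e]; ring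
      linarith
    set N' := ⌊q⌋₊ with hN'def
    have hN'pos : 0 < N' := by
      apply Nat.floor_pos.mpr
      linarith
    have hN'r : (0:ℝ) < (N':ℝ) := by exact_mod_cast hN'pos
    have hN'le : (N':ℝ) ≤ q := Nat.floor_le hq0.le
    have hN'ge : q - 1 ≤ (N':ℝ) := by
      have := Nat.lt_floor_add_one q
      linarith
    have hN'ge2 : q/2 ≤ (N':ℝ) := by linarith
    obtain ⟨XN, hXN, sN'⟩ := hstar N' hN'pos ε hε hε1
    rw [← hAdef] at sN'
    set x : ℝ := max Xs XN with hxdef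
    have hx1 : Xs ≤ x := le_max_left _ _
    have hx2 : XN ≤ x := le_max_right _ _
    have hxpos : 0 < x := lt_of_lt_of_le hXs hx1
    have hM1 : (1:ℝ) ≤ (M:ℝ) := le_trans hek1 hMge
    have hMx : x ≤ (M:ℝ)*x := le_mul_of_one_le_left hxpos.le hM1
    have hgMx : 0 < g ((M:ℝ)*x) := hgpos _ (mul_pos hMr hxpos)
    have c1 : f N' * g ((M:ℝ)*x) ≤ A * g ((N':ℝ)*((1+ε)*((M:ℝ)*x))) :=
      sN' _ (le_trans hx2 hMx)
    have hprod : (N':ℝ)*((1+ε)*(M:ℝ)) ≤ (n:ℝ)^k := by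
      rw [hqdef, le_div_iff₀ hdenpos] at hN'le
      linarith
    have c2 : g ((N':ℝ)*((1+ε)*((M:ℝ)*x))) ≤ g ((n:ℝ)^k * x) := by
      apply hmono _ _ (by positivity)
      calc (N':ℝ)*((1+ε)*((M:ℝ)*x)) = ((N':ℝ)*((1+ε)*(M:ℝ))) * x := by ring
        _ ≤ (n:ℝ)^k * x := mul_le_mul_of_nonneg_right hprod hxpos.le
    have c3 : g ((n:ℝ)^k * x) ≤ (A * f n)^k * g ((1+ε)^k * x) :=
      iter_lo f g hfpos n hn ε A Xs hε hApos hXs ss k x hx1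
    have c4 : g ((1+ε)^k * x) ≤ g ((M:ℝ)*x) := by
      apply hmono _ _ (by positivity)
      exact mul_le_mul_of_nonneg_right hMge hxpos.le
    have c5 : f N' * g ((M:ℝ)*x) ≤ (A * (A * f n)^k) * g ((M:ℝ)*x) := by
      calc f N' * g ((M:ℝ)*x) ≤ A * g ((N':ℝ)*((1+ε)*((M:ℝ)*x))) := c1
        _ ≤ A * g ((n:ℝ)^k * x) := mul_le_mul_of_nonneg_left c2 hApos.le
        _ ≤ A * ((A * f n)^k * g ((1+ε)^k * x)) := mul_le_mul_of_nonneg_left c3 hApos.le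
        _ ≤ A * ((A * f n)^k * g ((M:ℝ)*x)) := by
            apply mul_le_mul_of_nonneg_left _ hApos.le
            exact mul_le_mul_of_nonneg_left c4 (pow_nonneg (mul_pos hApos (hfpos n)).le k)
        _ = (A * (A * f n)^k) * g ((M:ℝ)*x) := by ring
    have c6 : f N' ≤ A * (A * f n)^k := le_of_mul_le_mul_right c5 hgMx
    have c7 : Real.exp (-d) * (N':ℝ)^c ≤ f N' := hflo N' hN'pos
    -- lower bound on N'^c
    have hD1 : (1:ℝ) ≤ (4:ℝ)^|c| := by
      rw [show (1:ℝ) = (4:ℝ)^(0:ℝ) from (Real.rpow_zero 4).symm]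
      exact Real.rpow_le_rpow_of_exponent_le (by norm_num) (abs_nonneg c)
    have hD2' : (1:ℝ) ≤ (1+ε)^|c| := by
      calc (1:ℝ) = (1+ε)^(0:ℝ) := (Real.rpow_zero _).symm
        _ ≤ (1+ε)^|c| := Real.rpow_le_rpow_of_exponent_le h1ε1 (abs_nonneg c)
    have hD2 : (1:ℝ) ≤ ((1+ε)^|c|)^(k+1) := one_le_pow₀ hD2'
    have hN'c : ((n:ℝ)^c)^k / ((4:ℝ)^|c| * ((1+ε)^|c|)^(k+1)) ≤ (N':ℝ)^c := by
      have hnkc : (0:ℝ) ≤ ((n:ℝ)^c)^k := pow_nonneg (Real.rpow_nonneg hnr.le c) k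
      rcases le_or_gt 0 c with hc0 | hc0
      · have habs : |c| = c := abs_of_nonneg hc0
        have hlow : (n:ℝ)^k / (4*(1+ε)^(k+1)) ≤ (N':ℝ) := by
          have e : (1+ε)^(k+1) = (1+ε)^k * (1+ε) := pow_succ _ _
          have h8 : (1+ε)*(M:ℝ) ≤ 2*(1+ε)^(k+1) := by
            calc (1+ε)*(M:ℝ) ≤ (1+ε)*(2*(1+ε)^k) := mul_le_mul_of_nonneg_left hMle2 h1ε.le
              _ = 2*(1+ε)^(k+1) := by rw [e]; ring
          have h9 : (n:ℝ)^k / (2*(1+ε)^(k+1)) ≤ q := by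
            rw [hqdef]
            apply div_le_div_of_nonneg_left (pow_pos hnr k).le hdenpos h8
          have e2 : (n:ℝ)^k / (4*(1+ε)^(k+1)) = ((n:ℝ)^k / (2*(1+ε)^(k+1)))/2 := by
            rw [div_div]; ring_nf
          rw [e2]
          linarith
        calc ((n:ℝ)^c)^k / ((4:ℝ)^|c| * ((1+ε)^|c|)^(k+1))
            = ((n:ℝ)^k / (4*(1+ε)^(k+1)))^c := by
              rw [Real.div_rpow (pow_pos hnr k).le (by positivity),
                Real.mul_rpow (by norm_num) (by positivity),
                pow_rpow_comm _ hnr, pow_rpow_comm _ h1ε, habs]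
          _ ≤ (N':ℝ)^c := Real.rpow_le_rpow (by positivity) hlow hc0
      · have hqle : q ≤ (n:ℝ)^k := by
          rw [hqdef]
          apply div_le_self (pow_pos hnr k).le
          have hM1 : (1:ℝ) ≤ (M:ℝ) := le_trans hek1 hMge
          calc (1:ℝ) = 1*1 := (one_mul 1).symm
            _ ≤ (1+ε)*(M:ℝ) := mul_le_mul h1ε1 hM1 (by norm_num) h1ε.le
        have hup : (N':ℝ) ≤ (n:ℝ)^k := le_trans hN'le hqle
        have s1 : ((n:ℝ)^k)^c ≤ (N':ℝ)^c :=
          Real.rpow_le_rpow_of_nonpos hN'r hup hc0.le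
        calc ((n:ℝ)^c)^k / ((4:ℝ)^|c| * ((1+ε)^|c|)^(k+1))
            ≤ ((n:ℝ)^c)^k := by
              apply div_le_self hnkc
              calc (1:ℝ) ≤ (4:ℝ)^|c| := hD1
                _ = (4:ℝ)^|c| * 1 := (mul_one _).symm
                _ ≤ (4:ℝ)^|c| * ((1+ε)^|c|)^(k+1) :=
                    mul_le_mul_of_nonneg_left hD2 (by linarith)
          _ = ((n:ℝ)^k)^c := (pow_rpow_comm _ hnr _ _).symm
          _ ≤ (N':ℝ)^c := s1
    -- assemble
    have hfneq : (n:ℝ)^c = t * f n := by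
      rw [htdef, div_mul_cancel₀ _ (hfpos n).ne']
    have hDpos : (0:ℝ) < (4:ℝ)^|c| * ((1+ε)^|c|)^(k+1) := by positivity
    have E0 : Real.exp (-d) * (((n:ℝ)^c)^k / ((4:ℝ)^|c| * ((1+ε)^|c|)^(k+1)))
        ≤ A * (A * f n)^k := by
      calc Real.exp (-d) * (((n:ℝ)^c)^k / ((4:ℝ)^|c| * ((1+ε)^|c|)^(k+1)))
          ≤ Real.exp (-d) * (N':ℝ)^c :=
            mul_le_mul_of_nonneg_left hN'c (Real.exp_nonneg _)
        _ ≤ f N' := c7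
        _ ≤ A * (A * f n)^k := c6
    have E : (t * f n)^k ≤ Const * (φ * f n)^k := by
      rw [← hfneq]
      have h0 : (0:ℝ) < Real.exp d := Real.exp_pos d
      have h1 : ((n:ℝ)^c)^k / ((4:ℝ)^|c| * ((1+ε)^|c|)^(k+1))
          ≤ Real.exp d * (A * (A * f n)^k) := by
        rw [Real.exp_neg, inv_mul_le_iff₀ h0] at E0
        exact E0
      rw [div_le_iff₀ hDpos] at h1
      calc ((n:ℝ)^c)^k
          ≤ Real.exp d * (A * (A * f n)^k) * ((4:ℝ)^|c| * ((1+ε)^|c|)^(k+1)) := h1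
        _ = Const * (φ * f n)^k := by
            rw [hCdef, hφdef, mul_pow (A * (1+ε)^|c|) (f n) k,
              mul_pow A ((1+ε)^|c|) k, mul_pow A (f n) k, pow_succ ((1+ε)^|c|) k]
            ring
    have E2 : t^k ≤ Const * φ^k := by
      have e1 : (t * f n)^k = t^k * (f n)^k := mul_pow _ _ _
      have e2 : Const * (φ * f n)^k = (Const * φ^k) * (f n)^k := by
        rw [mul_pow]; ring
      rw [e1, e2] at E
      exact le_of_mul_le_mul_right E (pow_pos (hfpos n) k)
    rw [div_pow, div_le_iff₀ (pow_pos hφpos k)]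
    linarith
  -- eventual contradiction
  have hrat : 1 < (n:ℝ)/(1+ε) := by
    rw [lt_div_iff₀ h1ε]
    linarith
  have ev1 : ∀ᶠ k : ℕ in atTop, 4*(1+ε)^(k+1) ≤ (n:ℝ)^k := by
    filter_upwards [(tendsto_pow_atTop_atTop_of_one_lt hrat).eventually_ge_atTop
      (4*(1+ε))] with k hk
    have e : ((n:ℝ)/(1+ε))^k * (1+ε)^k = (n:ℝ)^k := by
      rw [← mul_pow, div_mul_cancel₀ _ h1ε.ne']
    have hek : (0:ℝ) < (1+ε)^k := pow_pos h1ε k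
    have e2 : (1+ε)^(k+1) = (1+ε)^k * (1+ε) := pow_succ _ _
    calc 4*(1+ε)^(k+1) = (4*(1+ε))*(1+ε)^k := by rw [e2]; ring
      _ ≤ ((n:ℝ)/(1+ε))^k*(1+ε)^k := mul_le_mul_of_nonneg_right hk hek.le
      _ = (n:ℝ)^k := e
  have ev2 : ∀ᶠ k : ℕ in atTop, Const < (t/φ)^k :=
    (tendsto_pow_atTop_atTop_of_one_lt ((one_lt_div hφpos).mpr hφ')).eventually_gt_atTop
      Const
  obtain ⟨k, hk1, hk2⟩ := (ev1.and ev2).exists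
  exact absurd (hcon2 k hk1) (not_le.mpr hk2)

/-- If `S` is contained in `T` away from `0` and `T` has zero upper density,
then so does `S`. -/
lemma upperDensity_zero_of (S T : Set ℕ) (h : ∀ n : ℕ, 0 < n → n ∈ S → n ∈ T)
    (hT : upperDensity T = 0) : upperDensity S = 0 := by
  have hcount : ∀ N : ℕ, (({n | n ∈ S ∧ n ≤ N} : Set ℕ).ncard : ℝ)
      ≤ (({n | n ∈ T ∧ n ≤ N} : Set ℕ).ncard : ℝ) + 1 := by
    intro N
    have hsub : ({n | n ∈ S ∧ n ≤ N} : Set ℕ) ⊆ ({n | n ∈ T ∧ n ≤ N} : Set ℕ) ∪ {0} := by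
      intro n hn
      rcases Nat.eq_zero_or_pos n with rfl | hpos
      · right; rfl
      · left; exact ⟨h n hpos hn.1, hn.2⟩
    have hfinT : ({n | n ∈ T ∧ n ≤ N} : Set ℕ).Finite :=
      (Set.finite_Iic N).subset (fun n hn => hn.2)
    have h1 : ({n | n ∈ S ∧ n ≤ N} : Set ℕ).ncard
        ≤ (({n | n ∈ T ∧ n ≤ N} : Set ℕ) ∪ {0}).ncard :=
      Set.ncard_le_ncard hsub (hfinT.union (Set.finite_singleton 0))
    have h2 : (({n | n ∈ T ∧ n ≤ N} : Set ℕ) ∪ {0}).ncard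
        ≤ ({n | n ∈ T ∧ n ≤ N} : Set ℕ).ncard + 1 := by
      calc (({n | n ∈ T ∧ n ≤ N} : Set ℕ) ∪ {0}).ncard
          ≤ ({n | n ∈ T ∧ n ≤ N} : Set ℕ).ncard + ({0} : Set ℕ).ncard :=
            Set.ncard_union_le _ _
        _ = ({n | n ∈ T ∧ n ≤ N} : Set ℕ).ncard + 1 := by rw [Set.ncard_singleton]
    exact_mod_cast le_trans h1 h2
  have hvz : Tendsto (fun N : ℕ => (({n | n ∈ T ∧ n ≤ N} : Set ℕ).ncard : ℝ) / N)
      atTop (𝓝 0) := by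
    rw [tendsto_order]
    constructor
    · intro a ha
      filter_upwards [eventually_ge_atTop 1] with N hN
      have : (0:ℝ) ≤ (({n | n ∈ T ∧ n ≤ N} : Set ℕ).ncard : ℝ) / N := by positivity
      linarith
    · intro a ha
      obtain ⟨N₀, hN₀1, hN₀⟩ := density_count T hT (a/2) (by linarith)
      filter_upwards [eventually_ge_atTop N₀] with N hN
      have h1 : 1 ≤ N := le_trans hN₀1 hN
      have hNr : (0:ℝ) < N := by exact_mod_cast h1
      rw [div_lt_iff₀ hNr]
      have := hN₀ N hN
      nlinarith
  have huz : Tendsto (fun N : ℕ => (({n | n ∈ S ∧ n ≤ N} : Set ℕ).ncard : ℝ) / N)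
      atTop (𝓝 0) := by
    have hupper : Tendsto (fun N : ℕ =>
        (({n | n ∈ T ∧ n ≤ N} : Set ℕ).ncard : ℝ) / N + 1 / N) atTop (𝓝 (0 + 0)) :=
      hvz.add (tendsto_one_div_atTop_nhds_zero_nat)
    rw [add_zero] at hupper
    apply tendsto_of_tendsto_of_tendsto_of_le_of_le' tendsto_const_nhds hupper
    · filter_upwards with N
      positivity
    · filter_upwards [eventually_ge_atTop 1] with N hN
      have hNr : (0:ℝ) < N := by exact_mod_cast hN
      rw [← add_div, div_le_div_iff_of_pos_right hNr]
      exact hcount N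
  rw [upperDensity]
  exact huz.limsup_eq

/-- Core theorem: the nondecreasing case. -/
theorem core_nondecreasing (f : ℕ → ℝ) (g : ℝ → ℝ)
    (hfpos : ∀ n, 0 < f n)
    (hwsm : WeaklySuperMult f)
    (hwsm' : WeaklySuperMult (fun k => 1 / f k))
    (hgpos : ∀ x : ℝ, 0 < x → 0 < g x)
    (hmono : ∀ x y : ℝ, 0 < x → x ≤ y → g x ≤ g y)
    (hno : HasNormalOrder f g) :
    ∃ c : ℝ, ∀ n : ℕ, 0 < n → f n = (n : ℝ) ^ c := by
  have hstar := fun n hn ε hε hε1 =>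
    wsm_star f g hfpos hgpos hmono hno hwsm n hn ε hε hε1
  have hss := fun n hn ε hε hε1 =>
    wsm_starstar f g hfpos hgpos hmono hno hwsm' n hn ε hε hε1
  have hwin := fun ε hε hε3 => wsm_window f g hgpos hmono hss ε hε hε3
  obtain ⟨Q, hQ1, hQmul, hQmono⟩ := almost_mult f g hfpos hgpos hstar hss hwin hmono
  have hf1 : f 1 = 1 := f_one f hfpos hwsm hwsm'
  have hQ0 : 0 < Q := lt_of_lt_of_le one_pos hQ1
  have hd : 0 ≤ Real.log Q := Real.log_nonneg hQ1
  have h1 : Real.log (f 1) = 0 := by rw [hf1, Real.log_one]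
  have hadd₁ : ∀ n m : ℕ, 0 < n → 0 < m →
      Real.log (f (n*m)) ≤ Real.log (f n) + Real.log (f m) + Real.log Q := by
    intro n m hn hm
    have e := (Real.log_le_log_iff (hfpos (n*m))
      (mul_pos hQ0 (mul_pos (hfpos n) (hfpos m)))).mpr (hQmul n m hn hm).1
    rw [Real.log_mul hQ0.ne' (mul_pos (hfpos n) (hfpos m)).ne',
      Real.log_mul (hfpos n).ne' (hfpos m).ne'] at e
    linarith
  have hadd₂ : ∀ n m : ℕ, 0 < n → 0 < m →
      Real.log (f n) + Real.log (f m) ≤ Real.log (f (n*m)) + Real.log Q := by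
    intro n m hn hm
    have e := (Real.log_le_log_iff (mul_pos (hfpos n) (hfpos m))
      (mul_pos hQ0 (hfpos (n*m)))).mpr (hQmul n m hn hm).2
    rw [Real.log_mul hQ0.ne' (hfpos (n*m)).ne',
      Real.log_mul (hfpos n).ne' (hfpos m).ne'] at e
    linarith
  have hmono' : ∀ n m : ℕ, 0 < n → n ≤ m →
      Real.log (f n) ≤ Real.log (f m) + Real.log Q := by
    intro n m hn hnm
    have e := (Real.log_le_log_iff (hfpos n)
      (mul_pos hQ0 (hfpos m))).mpr (hQmono n m hn hnm)
    rw [Real.log_mul hQ0.ne' (hfpos m).ne'] at e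
    linarith
  obtain ⟨c, hc⟩ := L_structure (fun n => Real.log (f n)) (Real.log Q)
    hd h1 hadd₁ hadd₂ hmono'
  refine ⟨c, ?_⟩
  have hfup : ∀ N : ℕ, 0 < N → f N ≤ Real.exp (Real.log Q) * (N:ℝ)^c := by
    intro N hN
    have hNr : (0:ℝ) < (N:ℝ) := by exact_mod_cast hN
    have h2 := abs_le.mp (hc N hN)
    calc f N = Real.exp (Real.log (f N)) := (Real.exp_log (hfpos N)).symm
      _ ≤ Real.exp (c * Real.log N + Real.log Q) :=
          Real.exp_le_exp.mpr (by linarith [h2.2])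
      _ = Real.exp (Real.log Q) * (N:ℝ)^c := by
          rw [Real.exp_add, Real.rpow_def_of_pos hNr, mul_comm (Real.log (N:ℝ)) c]
          ring
  have hflo : ∀ N : ℕ, 0 < N → Real.exp (-Real.log Q) * (N:ℝ)^c ≤ f N := by
    intro N hN
    have hNr : (0:ℝ) < (N:ℝ) := by exact_mod_cast hN
    have h2 := abs_le.mp (hc N hN)
    calc Real.exp (-Real.log Q) * (N:ℝ)^c
        = Real.exp (c * Real.log N + (-Real.log Q)) := by
          rw [Real.exp_add, Real.rpow_def_of_pos hNr, mul_comm (Real.log (N:ℝ)) c]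
          ring
      _ ≤ Real.exp (Real.log (f N)) := Real.exp_le_exp.mpr (by linarith [h2.1])
      _ = f N := Real.exp_log (hfpos N)
  intro n hn
  rcases eq_or_lt_of_le (Nat.one_le_iff_ne_zero.mpr hn.ne') with h1n | h2n
  · rw [← h1n, hf1]
    norm_num
  · have hup := upper_side f g hfpos hgpos hmono hstar hss hwin c (Real.log Q)
      hd hfup n hn
    have hlo := lower_side f g hfpos hgpos hmono hstar hss c (Real.log Q)
      hd hflo n h2n
    exact le_antisymm hup hlo

/-- The main theorem. -/
theorem weakly_supermult_both_monotone_normal_order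
    (f : ℕ → ℝ) (g : ℝ → ℝ)
    (hfpos : ∀ n, 0 < f n)
    (hwsm : WeaklySuperMult f)
    (hwsm' : WeaklySuperMult (fun n => 1 / f n))
    (hgpos : ∀ x : ℝ, 0 < x → 0 < g x)
    (hgmono : (∀ x y : ℝ, 0 < x → x ≤ y → g x ≤ g y) ∨
              (∀ x y : ℝ, 0 < x → x ≤ y → g y ≤ g x))
    (hno : HasNormalOrder f g) :
    ∃ c : ℝ, ∀ n : ℕ, 0 < n → f n = (n : ℝ) ^ c := by
  rcases hgmono with hinc | hdec
  · exact core_nondecreasing f g hfpos hwsm hwsm' hgpos hinc hno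
  · -- apply the core theorem to 1/f and 1/g
    set f' : ℕ → ℝ := fun k => 1 / f k with hf'
    set g' : ℝ → ℝ := fun x => 1 / g x with hg'
    have hfpos' : ∀ n, 0 < f' n := fun n => by
      simp only [hf', one_div, inv_pos]; exact hfpos n
    have hwsm₂' : WeaklySuperMult (fun n => 1 / f' n) := by
      have e : (fun n => 1 / f' n) = f := by
        funext n
        simp [hf', one_div_one_div]
      rw [e]
      exact hwsm
    have hgpos' : ∀ x : ℝ, 0 < x → 0 < g' x := fun x hx => by
      simp only [hg', one_div, inv_pos]; exact hgpos x hx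
    have hmono' : ∀ x y : ℝ, 0 < x → x ≤ y → g' x ≤ g' y := by
      intro x y hx hxy
      simp only [hg']
      exact one_div_le_one_div_of_le (hgpos y (lt_of_lt_of_le hx hxy)) (hdec x y hx hxy)
    have hno' : HasNormalOrder f' g' := by
      intro ε hε
      set ε' : ℝ := ε / (1 + ε) with hε'def
      have hε'pos : 0 < ε' := by positivity
      have hε'lt : ε' < 1 := by
        rw [hε'def, div_lt_one (by linarith)]
        linarith
      apply upperDensity_zero_of _ {n : ℕ | ε' * g n ≤ |f n - g n|} _ (hno ε' hε'pos)
      intro n hn hmem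
      by_contra hcon
      simp only [Set.mem_setOf_eq, not_le] at hcon
      have hnr : (0:ℝ) < (n:ℝ) := by exact_mod_cast hn
      have hgn : 0 < g n := hgpos _ hnr
      have habs := abs_lt.mp hcon
      have hfn : (1 - ε') * g n < f n := by nlinarith [habs.1]
      have hfnpos := hfpos n
      have hmem' : ε * g' n ≤ |f' n - g' n| := hmem
      have hlt : |f' n - g' n| < ε * g' n := by
        have e1 : f' n - g' n = (g n - f n) / (f n * g n) := by
          rw [hf', hg']
          field_simp
        rw [e1, abs_div, abs_of_pos (by positivity : (0:ℝ) < f n * g n)]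
        have hcon' : |g n - f n| < ε' * g n := by
          rw [abs_sub_comm]
          exact hcon
        have e3 : ε * g' n = ε / g n := by rw [hg']; ring
        rw [e3, div_lt_div_iff₀ (mul_pos hfnpos hgn) hgn]
        have hεε' : (ε' * g (n:ℝ)) * g (n:ℝ) = ε * ((1 - ε') * g (n:ℝ) * g (n:ℝ)) := by
          have h1ε : (1:ℝ) + ε ≠ 0 := by linarith
          rw [hε'def]
          field_simp
          ring
        calc |g n - f n| * g n < (ε' * g n) * g n := mul_lt_mul_of_pos_right hcon' hgn
          _ = ε * ((1 - ε') * g n * g n) := hεε'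
          _ ≤ ε * (f n * g n) := mul_le_mul_of_nonneg_left
              (mul_le_mul_of_nonneg_right hfn.le hgn.le) hε.le
      linarith [hmem', hlt]
    obtain ⟨c, hc⟩ := core_nondecreasing f' g' hfpos' hwsm' hwsm₂' hgpos' hmono' hno'
    refine ⟨-c, fun n hn => ?_⟩
    have e := hc n hn
    have hnr : (0:ℝ) < (n:ℝ) := by exact_mod_cast hn
    rw [Real.rpow_neg hnr.le, ← e]
    simp [hf']
end
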